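/- arXiv:2409.01442 — 7 statements merged into one kernel-verified Lean document; each statement's English description precedes it below -/
import Mathlib

section
/- Let k ≥ 3 be an integer, let V be a finite set, and let (C_j)_{j ∈ J} be a family of subsets of V such that |C_i ∩ C_j| ≤ k−2 for all distinct i, j ∈ J. Let H be the k-uniform hypergraph on V whose edges are exactly the k-element subsets of V that are contained in C_j for some j ∈ J. Let F be a slowly growing k-uniform hypergraph with at least one edge in which every vertex lies in some edge. Then for every injective map φ from V(F) to V that sends every edge of F to an edge of H, there exists j ∈ J such that φ(V(F)) ⊆ C_j. -/
open Finset

/-- A family of edges is `k`-uniform if every edge has exactly `k` vertices. -/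
def IsKUniform (k : ℕ) {V : Type*} (E : Finset (Finset V)) : Prop :=
  ∀ e ∈ E, e.card = k

/-- `φ` sends every edge of `FE` to an edge of `HE`. -/
def MapsEdges {U V : Type*} [DecidableEq V] (FE : Finset (Finset U))
    (HE : Finset (Finset V)) (φ : U → V) : Prop :=
  ∀ e ∈ FE, e.image φ ∈ HE

/-- The hypergraph with edges `HE` is `F`-free: there is no injective map of
the vertices of `F` sending every edge of `F` to an edge of `H`. -/
def FFree {U V : Type*} [DecidableEq V] (FE : Finset (Finset U))
    (HE : Finset (Finset V)) : Prop :=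
  ¬ ∃ φ : U → V, Function.Injective φ ∧ MapsEdges FE HE φ

/-- `s` is an independent set of the hypergraph with edges `HE`. -/
def IsIndep {V : Type*} (HE : Finset (Finset V)) (s : Finset V) : Prop :=
  ∀ e ∈ HE, ¬ e ⊆ s

instance {V : Type*} [DecidableEq V] (HE : Finset (Finset V)) :
    DecidablePred (IsIndep HE) :=
  fun s => decidable_of_iff (∀ e ∈ HE, ¬ e ⊆ s) Iff.rfl

/-- A hypergraph is slowly growing if its edges can be ordered `e₁, …, e_t`
so that `|e_i \ (e₁ ∪ ⋯ ∪ e_{i-1})| ≤ 1` for all `i ∈ {2, …, t}`. -/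
def SlowlyGrowing {U : Type*} [DecidableEq U] (FE : Finset (Finset U)) : Prop :=
  ∃ l : List (Finset U), l.Nodup ∧ l.toFinset = FE ∧
    ∀ (i : ℕ) (hi : i < l.length), 1 ≤ i →
      ((l.get ⟨i, hi⟩) \ ((l.take i).foldr (· ∪ ·) ∅)).card ≤ 1

/-- A hypergraph is `k`-partite (degenerate) if its vertex set can be partitioned
into `k` parts such that every edge meets each part in exactly one vertex. -/
def KPartite (k : ℕ) {U : Type*} [DecidableEq U] (FE : Finset (Finset U)) : Prop :=
  ∃ f : U → Fin k, ∀ e ∈ FE, ∀ i : Fin k, (e.filter fun v => f v = i).card = 1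

/-- The off-diagonal Ramsey number `r(F, n)`: the least `N` such that every
`F`-free `k`-uniform hypergraph on `N` vertices contains an independent set
of size `n`. -/
noncomputable def ramseyNumber {U : Type} [DecidableEq U] (k : ℕ)
    (FE : Finset (Finset U)) (n : ℕ) : ℕ :=
  sInf {N : ℕ | ∀ HE : Finset (Finset (Fin N)), IsKUniform k HE → FFree FE HE →
    ∃ s : Finset (Fin N), s.card = n ∧ IsIndep HE s}

/-- `Δ_i(H)`: the maximum number of edges of `H` containing a common `i`-set of vertices. -/
def maxDeg {V : Type*} [Fintype V] [DecidableEq V]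
    (HE : Finset (Finset V)) (i : ℕ) : ℕ :=
  ((Finset.univ : Finset V).powersetCard i).sup fun T =>
    (HE.filter fun e => T ⊆ e).card

/-- The `k`-uniform hypergraph `F_{2k-1}` on the `2k-1` vertices
`v₁, …, v_{k-1}, w₁, …, w_k` (here `Sum.inl` are the `v`'s and `Sum.inr` the `w`'s),
with edges `{v₁, …, v_{k-1}, w_i}` for `1 ≤ i ≤ k-1` together with `{w₁, …, w_k}`. -/
def Fodd (k : ℕ) : Finset (Finset (Fin (k - 1) ⊕ Fin k)) :=
  (Finset.univ.image fun i : Fin (k - 1) =>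
      insert (Sum.inr (Fin.castLE (Nat.sub_le k 1) i))
        ((Finset.univ : Finset (Fin (k - 1))).image Sum.inl))
    ∪ {(Finset.univ : Finset (Fin k)).image Sum.inr}

lemma mem_foldr_union' {U : Type*} [DecidableEq U] (l : List (Finset U)) (x : U) :
    x ∈ l.foldr (· ∪ ·) ∅ ↔ ∃ e ∈ l, x ∈ e := by
  induction l with
  | nil => simp
  | cons a t ih => simp [ih]

/-- Let `(C_j)_{j ∈ J}` be subsets of a finite set `V` with pairwise
intersections of size at most `k - 2`, and let `H` be the `k`-uniform hypergraph on `V`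
whose edges are exactly the `k`-sets contained in some `C_j`. If `F` is a slowly growing
`k`-uniform hypergraph with at least one edge in which every vertex lies in some edge,
then every injective map `φ : V(F) → V` sending edges of `F` to edges of `H` has its
whole image inside a single `C_j`. -/
theorem statement6 (k : ℕ) (hk : 3 ≤ k)
    (V : Type) [Fintype V] [DecidableEq V]
    (J : Type) [Fintype J] [DecidableEq J]
    (C : J → Finset V)
    (hC : ∀ i j : J, i ≠ j → (C i ∩ C j).card ≤ k - 2)
    (HE : Finset (Finset V))
    (hHE : HE = (Finset.univ : Finset (Finset V)).filter fun e =>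
      e.card = k ∧ ∃ j : J, e ⊆ C j)
    (U : Type) [Fintype U] [DecidableEq U]
    (FE : Finset (Finset U))
    (huniform : IsKUniform k FE)
    (hslow : SlowlyGrowing FE)
    (hne : FE.Nonempty)
    (hcover : ∀ u : U, ∃ e ∈ FE, u ∈ e)
    (φ : U → V) (hinj : Function.Injective φ)
    (hmap : MapsEdges FE HE φ) :
    ∃ j : J, ∀ u : U, φ u ∈ C j := by
  obtain ⟨l, hnd, hlt, hsl⟩ := hslow
  -- basic facts about any edge of FE
  have hedge : ∀ e ∈ FE, e.card = k ∧ ∃ j : J, e.image φ ⊆ C j := by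
    intro e he
    have := hmap e he
    rw [hHE, Finset.mem_filter] at this
    exact ⟨huniform e he, this.2.2⟩
  have hlne : l ≠ [] := by
    intro h
    rw [h] at hlt
    simp at hlt
    rw [← hlt] at hne
    simp at hne
  have h0 : 0 < l.length := List.length_pos_iff.mpr hlne
  have hmem : ∀ n (hn : n < l.length), l.get ⟨n, hn⟩ ∈ FE := by
    intro n hn
    rw [← hlt, List.mem_toFinset]
    exact List.get_mem l ⟨n, hn⟩
  obtain ⟨j₀, hj₀⟩ := (hedge _ (hmem 0 h0)).2
  have key : ∀ n (hn : n < l.length), (l.get ⟨n, hn⟩).image φ ⊆ C j₀ := by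
    intro n
    induction n using Nat.strong_induction_on with
    | _ n ih =>
      intro hn
      rcases Nat.eq_zero_or_pos n with rfl | hpos
      · exact hj₀
      · -- image of prefix union lies in C j₀
        have hU : ((l.take n).foldr (· ∪ ·) ∅).image φ ⊆ C j₀ := by
          intro x hx
          obtain ⟨y, hy, rfl⟩ := Finset.mem_image.mp hx
          rw [mem_foldr_union'] at hy
          obtain ⟨e', he', hye'⟩ := hy
          obtain ⟨m, hm, hme⟩ := List.getElem_of_mem he'
          have hmlen : m < l.length := lt_of_lt_of_le (lt_of_lt_of_le hm (by simp)) le_rfl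
          have hmn : m < n := lt_of_lt_of_le hm (by simp [List.length_take])
          have : (l.take n)[m] = l[m] := List.getElem_take ..
          have he'' : e' = l.get ⟨m, hmlen⟩ := by
            rw [← hme, this]; rfl
          exact ih m hmn hmlen (Finset.mem_image_of_mem φ (he'' ▸ hye'))
        set e := l.get ⟨n, hn⟩ with hedef
        set W := (l.take n).foldr (· ∪ ·) ∅ with hW
        have hcard : (e \ W).card ≤ 1 := hsl n hn hpos
        have hek : e.card = k := (hedge e (hmem n hn)).1
        have hint : k - 1 ≤ (e ∩ W).card := by
          have := Finset.card_inter_add_card_sdiff e W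
          omega
        obtain ⟨j', hj'⟩ := (hedge e (hmem n hn)).2
        have hsub1 : (e ∩ W).image φ ⊆ C j' := fun x hx => by
          obtain ⟨y, hy, rfl⟩ := Finset.mem_image.mp hx
          exact hj' (Finset.mem_image_of_mem φ (Finset.mem_of_mem_inter_left hy))
        have hsub2 : (e ∩ W).image φ ⊆ C j₀ := fun x hx => by
          obtain ⟨y, hy, rfl⟩ := Finset.mem_image.mp hx
          exact hU (Finset.mem_image_of_mem φ (Finset.mem_of_mem_inter_right hy))
        have hcardim : ((e ∩ W).image φ).card = (e ∩ W).card :=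
          Finset.card_image_of_injective _ hinj
        have hjj : j' = j₀ := by
          by_contra hne'
          have hle := hC j' j₀ hne'
          have : (e ∩ W).image φ ⊆ C j' ∩ C j₀ := fun x hx =>
            Finset.mem_inter.mpr ⟨hsub1 hx, hsub2 hx⟩
          have := Finset.card_le_card this
          omega
        exact hjj ▸ hj'

  refine ⟨j₀, fun u => ?_⟩
  obtain ⟨e, he, hue⟩ := hcover u
  have : e ∈ l := by rw [← List.mem_toFinset, hlt]; exact he
  obtain ⟨m, hm, hme⟩ := List.getElem_of_mem this
  have : e = l.get ⟨m, hm⟩ := hme.symm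
  exact key m hm (Finset.mem_image_of_mem φ (this ▸ hue))
end

section
/- Let k ≥ 3 be an integer, let V be a finite set, and let (C_j)_{j ∈ J} be a family of subsets of V such that |C_i ∩ C_j| ≤ k−2 for all distinct i, j ∈ J. For each j ∈ J let c_j : C_j → {1,...,k} be an arbitrary coloring, and let H* be the k-uniform hypergraph on V whose edges are exactly the k-element subsets e of V for which there exists j ∈ J with e ⊆ C_j and with c_j restricted to e taking all k values. Then for every slowly growing non-degenerate k-uniform hypergraph F that has at least one edge and in which every vertex lies in some edge, H* is F-free. -/
open Finset

lemma filter_card_one' {U : Type*} [DecidableEq U] (k : ℕ) (e : Finset U) (g : U → Fin k)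
    (hcard : e.card = k) (hsurj : ∀ i : Fin k, ∃ v ∈ e, g v = i) :
    ∀ i : Fin k, (e.filter fun v => g v = i).card = 1 := by
  have hsum : ∑ i : Fin k, (e.filter fun v => g v = i).card = k := by
    rw [← Finset.card_eq_sum_card_fiberwise (fun x _ => Finset.mem_univ (g x)), hcard]
  have hpos : ∀ i : Fin k, 1 ≤ (e.filter fun v => g v = i).card := by
    intro i
    obtain ⟨v, hv, hgv⟩ := hsurj i
    exact Finset.card_pos.2 ⟨v, Finset.mem_filter.2 ⟨hv, hgv⟩⟩
  intro i
  by_contra h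
  have h2 : 2 ≤ (e.filter fun v => g v = i).card := by have := hpos i; omega
  rw [← Finset.sum_erase_add _ _ (Finset.mem_univ i)] at hsum
  have hlow : ((Finset.univ : Finset (Fin k)).erase i).card ≤
      ∑ x ∈ (Finset.univ : Finset (Fin k)).erase i, (e.filter fun v => g v = x).card := by
    calc ((Finset.univ : Finset (Fin k)).erase i).card
        = ∑ x ∈ (Finset.univ : Finset (Fin k)).erase i, 1 := by simp
      _ ≤ _ := Finset.sum_le_sum fun x _ => hpos x
  have hec : ((Finset.univ : Finset (Fin k)).erase i).card = k - 1 := by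
    rw [Finset.card_erase_of_mem (Finset.mem_univ i)]; simp
  have hk1 : 1 ≤ k := i.pos
  omega

/-- Let `(C_j)_{j ∈ J}` be subsets of a finite set `V` with pairwise
intersections of size at most `k - 2`, let `c_j : C_j → {1, …, k}` be arbitrary colorings,
and let `H*` be the `k`-uniform hypergraph on `V` whose edges are exactly the `k`-sets
contained in some `C_j` on which `c_j` takes all `k` values. Then `H*` is `F`-free for
every slowly growing non-degenerate `k`-uniform hypergraph `F` with at least one edge in
which every vertex lies in some edge. -/
theorem statement7 (k : ℕ) (hk : 3 ≤ k)
    (V : Type) [Fintype V] [DecidableEq V]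
    (J : Type) [Fintype J] [DecidableEq J]
    (C : J → Finset V)
    (hC : ∀ i j : J, i ≠ j → (C i ∩ C j).card ≤ k - 2)
    (c : J → V → Fin k)
    (HE : Finset (Finset V))
    (hHE : HE = (Finset.univ : Finset (Finset V)).filter fun e =>
      e.card = k ∧ ∃ j : J, e ⊆ C j ∧ ∀ i : Fin k, ∃ v ∈ e, c j v = i)
    (U : Type) [Fintype U] [DecidableEq U]
    (FE : Finset (Finset U))
    (huniform : IsKUniform k FE)
    (hslow : SlowlyGrowing FE)
    (hnondeg : ¬ KPartite k FE)
    (hne : FE.Nonempty)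
    (hcover : ∀ u : U, ∃ e ∈ FE, u ∈ e) :
    FFree FE HE := by
  rintro ⟨φ, hinj, hmaps⟩
  obtain ⟨l, hnodup, hl, hgrow⟩ := hslow
  have hlen : 0 < l.length := by
    rcases hne with ⟨e, he⟩
    rw [← hl] at he
    rcases l with _ | ⟨a, t⟩
    · simp at he
    · simp
  have hmemFE : ∀ (i : ℕ) (hi : i < l.length), l.get ⟨i, hi⟩ ∈ FE := by
    intro i hi
    rw [← hl]
    exact List.mem_toFinset.2 (l.get_mem ⟨i, hi⟩)
  have key : ∀ e ∈ FE, ∃ j, (e.image φ ⊆ C j) ∧ ∀ i : Fin k, ∃ v ∈ e.image φ, c j v = i := by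
    intro e he
    have h := hmaps e he
    rw [hHE, Finset.mem_filter] at h
    exact h.2.2
  have hcardim : ∀ e ∈ FE, (e.image φ).card = k := by
    intro e he
    rw [Finset.card_image_of_injective _ hinj]
    exact huniform e he
  have uniq : ∀ e ∈ FE, ∀ j j', e.image φ ⊆ C j → e.image φ ⊆ C j' → j = j' := by
    intro e he j j' h1 h2
    by_contra hjj
    have hsub := Finset.subset_inter h1 h2
    have hc1 := Finset.card_le_card hsub
    have hc2 := hC j j' hjj
    have hc3 := hcardim e he
    omega
  obtain ⟨j₀, hj₀sub, hj₀rain⟩ := key (l.get ⟨0, hlen⟩) (hmemFE 0 hlen)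
  have main : ∀ (i : ℕ) (hi : i < l.length), (l.get ⟨i, hi⟩).image φ ⊆ C j₀ := by
    intro i
    induction i using Nat.strong_induction_on with
    | _ i IH =>
      intro hi
      rcases Nat.eq_zero_or_pos i with rfl | hpos
      · exact hj₀sub
      · obtain ⟨j, hsub, hrain⟩ := key _ (hmemFE i hi)
        have hg := hgrow i hi hpos
        set T := (l.take i).foldr (· ∪ ·) ∅ with hT
        have hTsub : T.image φ ⊆ C j₀ := by
          intro x hx
          simp only [Finset.mem_image] at hx
          obtain ⟨u, hu, rfl⟩ := hx
          rw [mem_foldr_union'] at hu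
          obtain ⟨f, hf, huf⟩ := hu
          obtain ⟨m, hm, hfm⟩ := List.mem_iff_getElem.1 hf
          have hmi : m < i := by
            have := hm
            rw [List.length_take] at this
            omega
          have hmlen : m < l.length := lt_trans hmi hi
          have hfeq : f = l.get ⟨m, hmlen⟩ := by
            rw [← hfm]; simp [List.getElem_take]
          exact IH m hmi hmlen (Finset.mem_image_of_mem φ (hfeq ▸ huf))
        have hce : (l.get ⟨i, hi⟩).card = k := huniform _ (hmemFE i hi)
        have hdsi : ((l.get ⟨i, hi⟩) \ T).card + ((l.get ⟨i, hi⟩) ∩ T).card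
            = (l.get ⟨i, hi⟩).card := Finset.card_sdiff_add_card_inter _ _
        by_cases hj : j = j₀
        · exact hj ▸ hsub
        · exfalso
          have h1 : ((l.get ⟨i, hi⟩) ∩ T).image φ ⊆ C j ∩ C j₀ := by
            intro x hx
            simp only [Finset.mem_image] at hx
            obtain ⟨u, hu, rfl⟩ := hx
            exact Finset.mem_inter.2
              ⟨hsub (Finset.mem_image_of_mem φ (Finset.mem_of_mem_inter_left hu)),
               hTsub (Finset.mem_image_of_mem φ (Finset.mem_of_mem_inter_right hu))⟩
          have hc1 := Finset.card_le_card h1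
          rw [Finset.card_image_of_injective _ hinj] at hc1
          have hc2 := hC j j₀ hj
          omega
  refine hnondeg ⟨fun u => c j₀ (φ u), ?_⟩
  intro e he i
  obtain ⟨m, hm, hem⟩ : ∃ (m : ℕ) (hm : m < l.length), l.get ⟨m, hm⟩ = e := by
    have : e ∈ l := by rw [← List.mem_toFinset, hl]; exact he
    obtain ⟨m, hm, h⟩ := List.mem_iff_getElem.1 this
    exact ⟨m, hm, h⟩
  obtain ⟨j, hsub, hrain⟩ := key e he
  have hesub : e.image φ ⊆ C j₀ := hem ▸ main m hm
  have hj : j = j₀ := uniq e he j j₀ hsub hesub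
  subst hj
  have hsurj : ∀ i : Fin k, ∃ u ∈ e, c j (φ u) = i := by
    intro i
    obtain ⟨v, hv, hcv⟩ := hrain i
    simp only [Finset.mem_image] at hv
    obtain ⟨u, hu, rfl⟩ := hv
    exact ⟨u, hu, hcv⟩
  exact filter_card_one' k e _ (huniform e he) hsurj i
end

section
/- Let k ≥ 3 be an integer and let 𝔽 be a finite field of order q. Let N be the X × Y biadjacency matrix of Γ_{q,k−1} over the reals (rows indexed by X = 𝔽², columns by Y = 𝔽^{k−1}, with N(x,y) = 1 if x and y are adjacent and 0 otherwise), and let J be the X × Y all-ones matrix. Then N·Nᵀ·N = (q−1)·q^{k−3}·J + q^{k−2}·N. Equivalently, if A is the adjacency matrix of Γ_{q,k−1} on vertex set X ⊔ Y and M is the matrix with all entries between the two sides equal to 1 and all entries within each side equal to 0, then A³ = (q−1)q^{k−3}·M + q^{k−2}·A. -/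
open Finset Matrix

/-- Fibers of a surjective additive hom between finite groups all have the same size. -/
lemma fiber_card_mul {α β : Type} [Fintype α] [Fintype β] [DecidableEq β]
    [AddCommGroup α] [AddCommGroup β] (f : α →+ β) (hf : Function.Surjective f) (c : β) :
    (Finset.univ.filter fun a => f a = c).card * Fintype.card β = Fintype.card α := by
  have hfib : ∀ c' : β, (Finset.univ.filter fun a => f a = c').card
      = (Finset.univ.filter fun a => f a = c).card := by
    intro c'
    obtain ⟨a₀, ha₀⟩ := hf (c' - c)
    apply Finset.card_bij' (fun a _ => a - a₀) (fun a _ => a + a₀)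
    · intro a ha
      simp only [Finset.mem_filter, Finset.mem_univ, true_and] at ha ⊢
      simp [ha, ha₀]
    · intro a ha
      simp only [Finset.mem_filter, Finset.mem_univ, true_and] at ha ⊢
      simp [ha, ha₀]
    · intro a _; abel
    · intro a _; abel
  have := Finset.card_eq_sum_card_fiberwise
    (fun a (_ : a ∈ (Finset.univ : Finset α)) => Finset.mem_univ (f a))
  rw [Finset.card_univ] at this
  rw [this]
  simp only [hfib]
  rw [Finset.sum_const, Finset.card_univ, smul_eq_mul, mul_comm]

def evalHom (𝔽 : Type) [Field 𝔽] (n : ℕ) (a : 𝔽) : (Fin n → 𝔽) →+ 𝔽 where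
  toFun y := ∑ i, y i * a ^ (i : ℕ)
  map_zero' := by simp
  map_add' y z := by simp [add_mul, Finset.sum_add_distrib]

lemma eval_single {𝔽 : Type} [Field 𝔽] [DecidableEq 𝔽] {n : ℕ} (a : 𝔽) (j : Fin n) (c : 𝔽) :
    ∑ i : Fin n, (Pi.single j c : Fin n → 𝔽) i * a ^ (i : ℕ) = c * a ^ (j : ℕ) := by
  rw [Finset.sum_eq_single j]
  · simp
  · intro i _ hij; simp [Pi.single_eq_of_ne hij]
  · simp

lemma count1 {𝔽 : Type} [Field 𝔽] [Fintype 𝔽] [DecidableEq 𝔽] {n : ℕ} (hn : 1 ≤ n)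
    (a c : 𝔽) :
    (Finset.univ.filter fun y : Fin n → 𝔽 => ∑ i, y i * a ^ (i : ℕ) = c).card
      = Fintype.card 𝔽 ^ (n - 1) := by
  have hsurj : Function.Surjective (evalHom 𝔽 n a) := by
    intro b
    refine ⟨Pi.single ⟨0, by omega⟩ b, ?_⟩
    simp [evalHom, eval_single]
  have h := fiber_card_mul (evalHom 𝔽 n a) hsurj c
  have hcard : Fintype.card (Fin n → 𝔽) = Fintype.card 𝔽 ^ n := by simp
  rw [hcard] at h
  have hq : 0 < Fintype.card 𝔽 := Fintype.card_pos
  have : Fintype.card 𝔽 ^ n = Fintype.card 𝔽 ^ (n - 1) * Fintype.card 𝔽 := by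
    rw [← pow_succ, Nat.sub_add_cancel hn]
  rw [this] at h
  exact Nat.eq_of_mul_eq_mul_right hq h

def evalHom2 (𝔽 : Type) [Field 𝔽] (n : ℕ) (a a' : 𝔽) : (Fin n → 𝔽) →+ 𝔽 × 𝔽 :=
  (evalHom 𝔽 n a).prod (evalHom 𝔽 n a')

lemma count2 {𝔽 : Type} [Field 𝔽] [Fintype 𝔽] [DecidableEq 𝔽] {n : ℕ} (hn : 2 ≤ n)
    {a a' : 𝔽} (hne : a ≠ a') (c c' : 𝔽) :
    (Finset.univ.filter fun y : Fin n → 𝔽 =>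
        (∑ i, y i * a ^ (i : ℕ)) = c ∧ (∑ i, y i * a' ^ (i : ℕ)) = c').card
      = Fintype.card 𝔽 ^ (n - 2) := by
  have hsurj : Function.Surjective (evalHom2 𝔽 n a a') := by
    rintro ⟨b, b'⟩
    have hd : a' - a ≠ 0 := sub_ne_zero.2 (Ne.symm hne)
    set y1 : 𝔽 := (b' - b) / (a' - a) with hy1
    set y0 : 𝔽 := b - y1 * a with hy0
    have h01 : (⟨0, by omega⟩ : Fin n) ≠ ⟨1, by omega⟩ := by simp [Fin.ext_iff]
    refine ⟨Pi.single ⟨0, by omega⟩ y0 + Pi.single ⟨1, by omega⟩ y1, ?_⟩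
    have key : ∀ t : 𝔽, (evalHom 𝔽 n t) (Pi.single (⟨0, by omega⟩ : Fin n) y0
        + Pi.single (⟨1, by omega⟩ : Fin n) y1) = y0 + y1 * t := by
      intro t
      rw [map_add]
      simp only [evalHom, AddMonoidHom.coe_mk, ZeroHom.coe_mk, eval_single]
      simp
    have hy1' : y1 * (a' - a) = b' - b := div_mul_cancel₀ _ hd
    have h1 : y0 + y1 * a = b := by rw [hy0]; ring
    have h2 : y0 + y1 * a' = b' := by
      have : y0 + y1 * a' = (y0 + y1 * a) + y1 * (a' - a) := by ring
      rw [this, h1, hy1']; ring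
    simp only [evalHom2, AddMonoidHom.prod_apply, key, h1, h2]
  have h := fiber_card_mul (evalHom2 𝔽 n a a') hsurj (c, c')
  have hcard : Fintype.card (Fin n → 𝔽) = Fintype.card 𝔽 ^ n := by simp
  have hcard2 : Fintype.card (𝔽 × 𝔽) = Fintype.card 𝔽 ^ 2 := by
    simp [Fintype.card_prod, sq]
  rw [hcard, hcard2] at h
  have hfeq : (Finset.univ.filter fun y : Fin n → 𝔽 => evalHom2 𝔽 n a a' y = (c, c'))
      = (Finset.univ.filter fun y : Fin n → 𝔽 =>
        (∑ i, y i * a ^ (i : ℕ)) = c ∧ (∑ i, y i * a' ^ (i : ℕ)) = c') := by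
    apply Finset.filter_congr
    intro y _
    simp [evalHom2, evalHom, Prod.ext_iff]
  rw [hfeq] at h
  have hq : 0 < Fintype.card 𝔽 ^ 2 := by positivity
  have : Fintype.card 𝔽 ^ n = Fintype.card 𝔽 ^ (n - 2) * Fintype.card 𝔽 ^ 2 := by
    rw [← pow_add, Nat.sub_add_cancel hn]
  rw [this] at h
  exact Nat.eq_of_mul_eq_mul_right hq h

/-- Let `N` be the `X × Y` biadjacency matrix of `Γ_{q,k-1}` over `ℝ`
and `J` the all-ones matrix. Then `N · Nᵀ · N = (q-1)·q^{k-3} · J + q^{k-2} · N`. -/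
theorem statement8 (k q : ℕ) (hk : 3 ≤ k)
    (𝔽 : Type) [Field 𝔽] [Fintype 𝔽] [DecidableEq 𝔽] (hq : Fintype.card 𝔽 = q)
    (N : Matrix (𝔽 × 𝔽) (Fin (k - 1) → 𝔽) ℝ)
    (hN : ∀ (x : 𝔽 × 𝔽) (y : Fin (k - 1) → 𝔽),
      N x y = if x.2 = ∑ i : Fin (k - 1), y i * x.1 ^ (i : ℕ) then 1 else 0) :
    N * Nᵀ * N =
      (((q : ℝ) - 1) * (q : ℝ) ^ (k - 3)) • (Matrix.of fun _ _ => (1 : ℝ))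
        + ((q : ℝ) ^ (k - 2)) • N := by
  have hq1 : 1 ≤ q := by
    rw [← hq]; exact Fintype.card_pos
  -- key : inner product of rows
  have key : ∀ a b a' b' : 𝔽,
      (N * Nᵀ) (a, b) (a', b')
        = if a = a' then (if b = b' then (q : ℝ) ^ (k - 2) else 0) else (q : ℝ) ^ (k - 3) := by
    intro a b a' b'
    rw [Matrix.mul_apply]
    simp only [Matrix.transpose_apply]
    have step : ∀ y' : Fin (k - 1) → 𝔽, N (a, b) y' * N (a', b') y'
        = if ((∑ i, y' i * a ^ (i : ℕ)) = b ∧ (∑ i, y' i * a' ^ (i : ℕ)) = b')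
          then (1 : ℝ) else 0 := by
      intro y'
      rw [hN, hN]
      by_cases h1 : b = ∑ i, y' i * a ^ (i : ℕ) <;>
        by_cases h2 : b' = ∑ i, y' i * a' ^ (i : ℕ) <;>
        simp [h1, h2, eq_comm]
    rw [Finset.sum_congr rfl (fun y' _ => step y')]
    rw [Finset.sum_boole]
    by_cases hne : a = a'
    · subst hne
      by_cases hbb : b = b'
      · subst hbb
        have : (Finset.univ.filter fun y' : Fin (k-1) → 𝔽 =>
            (∑ i, y' i * a ^ (i : ℕ)) = b ∧ (∑ i, y' i * a ^ (i : ℕ)) = b)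
            = (Finset.univ.filter fun y' : Fin (k-1) → 𝔽 =>
            (∑ i, y' i * a ^ (i : ℕ)) = b) := by
          apply Finset.filter_congr; intro y _; exact and_self_iff
        rw [this, count1 (by omega), hq, if_pos rfl, if_pos rfl,
          show k-1-1 = k-2 from by omega]
        push_cast
        ring
      · have : (Finset.univ.filter fun y' : Fin (k-1) → 𝔽 =>
            (∑ i, y' i * a ^ (i : ℕ)) = b ∧ (∑ i, y' i * a ^ (i : ℕ)) = b') = ∅ := by
          apply Finset.filter_false_of_mem
          rintro y _ ⟨h1, h2⟩
          exact hbb (h1 ▸ h2.symm ▸ rfl)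
        rw [this]
        simp [hbb]
    · rw [count2 (by omega) hne, hq, if_neg hne, show k-1-2 = k-3 from by omega]
      push_cast
      ring
  ext ⟨a, b⟩ y
  rw [Matrix.mul_apply]
  have step2 : ∀ x' : 𝔽 × 𝔽, (N * Nᵀ) (a, b) x' * N x' y
      = (if a = x'.1 then (if b = x'.2 then (q : ℝ) ^ (k - 2) else 0) else (q : ℝ) ^ (k - 3))
        * (if x'.2 = ∑ i, y i * x'.1 ^ (i : ℕ) then 1 else 0) := by
    rintro ⟨a', b'⟩
    rw [key, hN]
  rw [Finset.sum_congr rfl (fun x' _ => step2 x')]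
  rw [Fintype.sum_prod_type]
  have inner : ∀ a' : 𝔽, (∑ b' : 𝔽,
      (if a = a' then (if b = b' then (q : ℝ) ^ (k - 2) else 0) else (q : ℝ) ^ (k - 3))
        * (if b' = ∑ i, y i * a' ^ (i : ℕ) then 1 else 0))
      = if a = a' then (if b = ∑ i, y i * a' ^ (i : ℕ) then (q : ℝ) ^ (k - 2) else 0)
        else (q : ℝ) ^ (k - 3) := by
    intro a'
    by_cases h : a = a'
    · simp only [h, if_true]
      rw [Finset.sum_eq_single (∑ i, y i * a' ^ (i : ℕ))]
      · simp
      · intro b' _ hb'; simp [hb']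
      · simp
    · simp only [h, if_false]
      rw [Finset.sum_eq_single (∑ i, y i * a' ^ (i : ℕ))]
      · simp
      · intro b' _ hb'; simp [hb']
      · simp
  rw [Finset.sum_congr rfl (fun a' _ => inner a')]
  rw [← Finset.add_sum_erase _ _ (Finset.mem_univ a)]
  have erase_sum : ∑ a' ∈ Finset.univ.erase a,
      (if a = a' then (if b = ∑ i, y i * a' ^ (i : ℕ) then (q : ℝ) ^ (k - 2) else 0)
        else (q : ℝ) ^ (k - 3)) = ((q : ℝ) - 1) * (q : ℝ) ^ (k - 3) := by
    rw [Finset.sum_congr rfl (fun a' ha' => by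
      rw [if_neg (Ne.symm (Finset.ne_of_mem_erase ha'))])]
    rw [Finset.sum_const, Finset.card_erase_of_mem (Finset.mem_univ a), Finset.card_univ, hq]
    rw [nsmul_eq_mul]
    congr 1
    push_cast [hq1]
    ring
  rw [erase_sum, if_pos rfl]
  simp only [Matrix.add_apply, Matrix.smul_apply, Matrix.of_apply, smul_eq_mul, mul_one, hN]
  by_cases hb : b = ∑ i, y i * a ^ (i : ℕ) <;> simp [hb] <;> ring
end

section
/- Let k ≥ 3 be an integer and let 𝔽 be a finite field of order q. Then for every S ⊆ X = 𝔽² and T ⊆ Y = 𝔽^{k−1}, the number e(S,T) of edges of Γ_{q,k−1} with one endpoint in S and the other in T satisfies |e(S,T) − |S|·|T|/q| ≤ q^{(k−2)/2}·√(|S|·|T|). -/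
open Finset


lemma st10_sum_cons {𝔽 : Type} [Field 𝔽] (n : ℕ) (a t : 𝔽) (z : Fin n → 𝔽) :
    ∑ i : Fin (n+1), (Fin.cons a z : Fin (n+1) → 𝔽) i * t ^ (i:ℕ)
      = a + ∑ i : Fin n, z i * t ^ ((i:ℕ)+1) := by
  rw [Fin.sum_univ_succ]
  simp [Fin.cons_succ]

lemma st10_sum_cons_cons {𝔽 : Type} [Field 𝔽] (n : ℕ) (a b t : 𝔽) (z : Fin n → 𝔽) :
    ∑ i : Fin (n+2), (Fin.cons a (Fin.cons b z) : Fin (n+2) → 𝔽) i * t ^ (i:ℕ)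
      = a + b * t + ∑ i : Fin n, z i * t ^ ((i:ℕ)+1+1) := by
  rw [Fin.sum_univ_succ, Fin.sum_univ_succ]
  simp [Fin.cons_succ, add_assoc]

lemma st10_count_one {𝔽 : Type} [Field 𝔽] [Fintype 𝔽] [DecidableEq 𝔽] (n : ℕ) (t c : 𝔽) :
    ((univ : Finset (Fin (n+1) → 𝔽)).filter
      (fun y => c = ∑ i : Fin (n+1), y i * t ^ (i:ℕ))).card = Fintype.card 𝔽 ^ n := by
  have : ((univ : Finset (Fin n → 𝔽))).card
      = ((univ : Finset (Fin (n+1) → 𝔽)).filter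
        (fun y => c = ∑ i : Fin (n+1), y i * t ^ (i:ℕ))).card := by
    apply Finset.card_nbij (fun z => (Fin.cons (c - ∑ i : Fin n, z i * t ^ ((i:ℕ)+1)) z : Fin (n+1) → 𝔽))
    · intro z _
      simp [Finset.mem_filter, st10_sum_cons]
    · intro z _ z' _ h
      simpa using congrArg Fin.tail h
    · intro y hy
      simp only [Finset.coe_filter, Set.mem_setOf_eq, Finset.mem_univ, true_and] at hy
      refine ⟨Fin.tail y, by simp, ?_⟩
      have h0 : y 0 = c - ∑ i : Fin n, Fin.tail y i * t ^ ((i:ℕ)+1) := by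
        rw [hy, Fin.sum_univ_succ]
        simp [Fin.tail]
      show (Fin.cons (c - ∑ i : Fin n, Fin.tail y i * t ^ ((i:ℕ)+1)) (Fin.tail y) : Fin (n+1) → 𝔽) = y
      rw [← h0, Fin.cons_self_tail]
  rw [← this]
  simp [Fintype.card_fun]

lemma st10_sum_expand {𝔽 : Type} [Field 𝔽] (n : ℕ) (t : 𝔽) (y : Fin (n+2) → 𝔽) :
    ∑ i : Fin (n+2), y i * t ^ (i:ℕ)
      = y 0 + y 1 * t + ∑ i : Fin n, y i.succ.succ * t ^ ((i:ℕ)+1+1) := by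
  rw [Fin.sum_univ_succ, Fin.sum_univ_succ]
  simp [add_assoc, Fin.succ_zero_eq_one]

lemma st10_count_two {𝔽 : Type} [Field 𝔽] [Fintype 𝔽] [DecidableEq 𝔽] (n : ℕ) (t t' c c' : 𝔽)
    (ht : t ≠ t') :
    ((univ : Finset (Fin (n+2) → 𝔽)).filter
      (fun y => c = ∑ i : Fin (n+2), y i * t ^ (i:ℕ)
        ∧ c' = ∑ i : Fin (n+2), y i * t' ^ (i:ℕ))).card = Fintype.card 𝔽 ^ n := by
  have hsub : t - t' ≠ 0 := sub_ne_zero.mpr ht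
  have key : ((univ : Finset (Fin n → 𝔽))).card
      = ((univ : Finset (Fin (n+2) → 𝔽)).filter
        (fun y => c = ∑ i : Fin (n+2), y i * t ^ (i:ℕ)
          ∧ c' = ∑ i : Fin (n+2), y i * t' ^ (i:ℕ))).card := by
    apply Finset.card_nbij (fun z =>
      (Fin.cons ((c - ∑ i : Fin n, z i * t ^ ((i:ℕ)+1+1))
          - ((c - ∑ i : Fin n, z i * t ^ ((i:ℕ)+1+1))
             - (c' - ∑ i : Fin n, z i * t' ^ ((i:ℕ)+1+1))) / (t - t') * t)
        (Fin.cons (((c - ∑ i : Fin n, z i * t ^ ((i:ℕ)+1+1))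
             - (c' - ∑ i : Fin n, z i * t' ^ ((i:ℕ)+1+1))) / (t - t')) z) : Fin (n+2) → 𝔽))
    · intro z _
      simp only [Finset.mem_coe, Finset.mem_filter, Finset.mem_univ, true_and, st10_sum_cons_cons]
      constructor
      · field_simp
        ring
      · field_simp
        ring
    · intro z _ z' _ h
      have := congrArg (fun w => Fin.tail (Fin.tail w)) h
      simpa [Fin.tail_cons] using this
    · intro y hy
      simp only [Finset.coe_filter, Set.mem_setOf_eq, Finset.mem_univ, true_and] at hy
      obtain ⟨hy1, hy2⟩ := hy
      rw [st10_sum_expand] at hy1 hy2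
      refine ⟨Fin.tail (Fin.tail y), by simp, ?_⟩
      have hzi : ∀ i : Fin n, Fin.tail (Fin.tail y) i = y i.succ.succ := fun i => rfl
      have hb : ((c - ∑ i : Fin n, Fin.tail (Fin.tail y) i * t ^ ((i:ℕ)+1+1))
             - (c' - ∑ i : Fin n, Fin.tail (Fin.tail y) i * t' ^ ((i:ℕ)+1+1))) / (t - t')
          = y 1 := by
        simp only [hzi]
        rw [hy1, hy2]
        field_simp
        ring
      have ha : (c - ∑ i : Fin n, Fin.tail (Fin.tail y) i * t ^ ((i:ℕ)+1+1))
          - ((c - ∑ i : Fin n, Fin.tail (Fin.tail y) i * t ^ ((i:ℕ)+1+1))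
             - (c' - ∑ i : Fin n, Fin.tail (Fin.tail y) i * t' ^ ((i:ℕ)+1+1))) / (t - t') * t
          = y 0 := by
        rw [hb]
        simp only [hzi]
        rw [hy1]
        ring
      show (Fin.cons _ (Fin.cons _ (Fin.tail (Fin.tail y))) : Fin (n+2) → 𝔽) = y
      rw [ha, hb]
      have h2 : (Fin.cons (y 1) (Fin.tail (Fin.tail y)) : Fin (n+1) → 𝔽) = Fin.tail y := by
        have := Fin.cons_self_tail (Fin.tail y)
        simpa [Fin.tail, Fin.succ_zero_eq_one] using this
      rw [h2, Fin.cons_self_tail]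
  rw [← key]
  simp [Fintype.card_fun]

lemma st10_main (n : ℕ) (𝔽 : Type) [Field 𝔽] [Fintype 𝔽] [DecidableEq 𝔽]
    (S : Finset (𝔽 × 𝔽)) (T : Finset (Fin (n+2) → 𝔽)) :
    |((((S ×ˢ T).filter fun p =>
          p.1.2 = ∑ i : Fin (n+2), p.2 i * p.1.1 ^ (i : ℕ)).card : ℝ)
        - (S.card : ℝ) * T.card / (Fintype.card 𝔽 : ℝ))| ≤
      Real.sqrt ((Fintype.card 𝔽 : ℝ) ^ (n+1)) * Real.sqrt ((S.card : ℝ) * T.card) := by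
  have hq1 : (0:ℝ) < (Fintype.card 𝔽 : ℝ) := by exact_mod_cast Fintype.card_pos
  set q : ℝ := (Fintype.card 𝔽 : ℝ) with hqdef
  have hq0 : q ≠ 0 := ne_of_gt hq1
  set f : (𝔽 × 𝔽) → (Fin (n+2) → 𝔽) → ℝ :=
    fun x y => (if x.2 = ∑ i : Fin (n+2), y i * x.1 ^ (i:ℕ) then (1:ℝ) else 0) - 1/q with hf
  -- single counts
  have hsingle : ∀ x : 𝔽 × 𝔽,
      ∑ y : Fin (n+2) → 𝔽, (if x.2 = ∑ i : Fin (n+2), y i * x.1 ^ (i:ℕ) then (1:ℝ) else 0)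
        = q ^ (n+1) := by
    intro x
    rw [Finset.sum_boole]
    have := st10_count_one (n+1) x.1 x.2
    rw [this]
    push_cast
    ring
  have hcardfun : (Fintype.card (Fin (n+2) → 𝔽) : ℝ) = q ^ (n+2) := by
    rw [Fintype.card_fun]
    push_cast
    simp [hqdef]
  -- pairwise sums
  have hff : ∀ x x' : 𝔽 × 𝔽, ∑ y : Fin (n+2) → 𝔽, f x y * f x' y
      ≤ if x = x' then q ^ (n+1) else 0 := by
    intro x x'
    have hexp : ∑ y : Fin (n+2) → 𝔽, f x y * f x' y
        = (∑ y : Fin (n+2) → 𝔽,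
            (if x.2 = ∑ i : Fin (n+2), y i * x.1 ^ (i:ℕ) then (1:ℝ) else 0)
            * (if x'.2 = ∑ i : Fin (n+2), y i * x'.1 ^ (i:ℕ) then (1:ℝ) else 0))
          - (1/q) * q^(n+1) - (1/q) * q^(n+1) + (Fintype.card (Fin (n+2) → 𝔽) : ℝ) * (1/q * (1/q)) := by
      have step : ∀ y : Fin (n+2) → 𝔽, f x y * f x' y
          = (if x.2 = ∑ i : Fin (n+2), y i * x.1 ^ (i:ℕ) then (1:ℝ) else 0)
              * (if x'.2 = ∑ i : Fin (n+2), y i * x'.1 ^ (i:ℕ) then (1:ℝ) else 0)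
            - (1/q) * (if x.2 = ∑ i : Fin (n+2), y i * x.1 ^ (i:ℕ) then (1:ℝ) else 0)
            - (1/q) * (if x'.2 = ∑ i : Fin (n+2), y i * x'.1 ^ (i:ℕ) then (1:ℝ) else 0)
            + 1/q * (1/q) := by
        intro y
        simp only [hf]
        ring
      rw [Finset.sum_congr rfl fun y _ => step y]
      rw [Finset.sum_add_distrib, Finset.sum_sub_distrib, Finset.sum_sub_distrib,
        ← Finset.mul_sum, ← Finset.mul_sum, hsingle x, hsingle x',
        Finset.sum_const, Finset.card_univ]
      push_cast
      ring
    have harith : (1/q) * q^(n+1) = q^n := by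
      field_simp
      ring
    have harith2 : (Fintype.card (Fin (n+2) → 𝔽) : ℝ) * (1/q * (1/q)) = q^n := by
      rw [hcardfun]
      field_simp
      ring
    rw [hexp, harith, harith2]
    by_cases hxx : x = x'
    · subst hxx
      rw [if_pos rfl]
      have : ∑ y : Fin (n+2) → 𝔽,
          (if x.2 = ∑ i : Fin (n+2), y i * x.1 ^ (i:ℕ) then (1:ℝ) else 0)
          * (if x.2 = ∑ i : Fin (n+2), y i * x.1 ^ (i:ℕ) then (1:ℝ) else 0)
          = q ^ (n+1) := by
        rw [← hsingle x]
        refine Finset.sum_congr rfl fun y _ => ?_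
        split_ifs <;> ring
      rw [this]
      have : (0:ℝ) ≤ q^n := by positivity
      linarith
    · simp only [if_neg hxx]
      have hprod : ∑ y : Fin (n+2) → 𝔽,
          (if x.2 = ∑ i : Fin (n+2), y i * x.1 ^ (i:ℕ) then (1:ℝ) else 0)
          * (if x'.2 = ∑ i : Fin (n+2), y i * x'.1 ^ (i:ℕ) then (1:ℝ) else 0)
          = ((Finset.univ.filter (fun y : Fin (n+2) → 𝔽 =>
              x.2 = ∑ i : Fin (n+2), y i * x.1 ^ (i:ℕ)
              ∧ x'.2 = ∑ i : Fin (n+2), y i * x'.1 ^ (i:ℕ))).card : ℝ) := by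
        rw [← Finset.sum_boole]
        refine Finset.sum_congr rfl fun y _ => ?_
        by_cases h1 : x.2 = ∑ i : Fin (n+2), y i * x.1 ^ (i:ℕ) <;>
          by_cases h2 : x'.2 = ∑ i : Fin (n+2), y i * x'.1 ^ (i:ℕ) <;>
          simp [h1, h2]
      rw [hprod]
      by_cases h1 : x.1 = x'.1
      · have hempty : (Finset.univ.filter (fun y : Fin (n+2) → 𝔽 =>
              x.2 = ∑ i : Fin (n+2), y i * x.1 ^ (i:ℕ)
              ∧ x'.2 = ∑ i : Fin (n+2), y i * x'.1 ^ (i:ℕ))) = ∅ := by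
          rw [Finset.filter_eq_empty_iff]
          intro y _
          rintro ⟨e1, e2⟩
          apply hxx
          have : x.2 = x'.2 := by rw [e1, e2, h1]
          exact Prod.ext h1 this
        rw [hempty]
        simp
        positivity
      · rw [st10_count_two n x.1 x'.1 x.2 x'.2 h1]
        push_cast
        simp [hqdef]
  -- Step A : rewrite LHS
  have hE : (((S ×ˢ T).filter fun p =>
          p.1.2 = ∑ i : Fin (n+2), p.2 i * p.1.1 ^ (i : ℕ)).card : ℝ)
        - (S.card : ℝ) * T.card / q
      = ∑ y ∈ T, ∑ x ∈ S, f x y := by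
    have h1 : (((S ×ˢ T).filter fun p =>
          p.1.2 = ∑ i : Fin (n+2), p.2 i * p.1.1 ^ (i : ℕ)).card : ℝ)
        = ∑ p ∈ S ×ˢ T, (if p.1.2 = ∑ i : Fin (n+2), p.2 i * p.1.1 ^ (i:ℕ) then (1:ℝ) else 0) := by
      rw [Finset.sum_boole]
    have h2 : ∑ y ∈ T, ∑ x ∈ S, f x y = ∑ p ∈ S ×ˢ T, f p.1 p.2 := by
      rw [Finset.sum_product]
      exact Finset.sum_comm
    have h3 : ∑ p ∈ S ×ˢ T, f p.1 p.2
        = (∑ p ∈ S ×ˢ T, if p.1.2 = ∑ i : Fin (n+2), p.2 i * p.1.1 ^ (i:ℕ) then (1:ℝ) else 0)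
          - (S.card : ℝ) * T.card / q := by
      simp only [hf]
      rw [Finset.sum_sub_distrib, Finset.sum_const, Finset.card_product]
      push_cast
      ring
    rw [h1, h2, h3]
  -- Step D : second moment bound
  have hsq : ∑ y : Fin (n+2) → 𝔽, (∑ x ∈ S, f x y)^2 ≤ (S.card : ℝ) * q^(n+1) := by
    have hD : ∑ y : Fin (n+2) → 𝔽, (∑ x ∈ S, f x y)^2
        = ∑ x ∈ S, ∑ x' ∈ S, ∑ y : Fin (n+2) → 𝔽, f x y * f x' y := by
      have e1 : ∀ y : Fin (n+2) → 𝔽, (∑ x ∈ S, f x y)^2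
          = ∑ x ∈ S, ∑ x' ∈ S, f x y * f x' y := by
        intro y
        rw [sq, Finset.sum_mul_sum]
      rw [Finset.sum_congr rfl fun y _ => e1 y]
      rw [Finset.sum_comm]
      refine Finset.sum_congr rfl fun x _ => Finset.sum_comm
    rw [hD]
    calc ∑ x ∈ S, ∑ x' ∈ S, ∑ y : Fin (n+2) → 𝔽, f x y * f x' y
        ≤ ∑ x ∈ S, ∑ x' ∈ S, (if x = x' then q^(n+1) else 0) := by
          refine Finset.sum_le_sum fun x _ => Finset.sum_le_sum fun x' _ => hff x x'
      _ ≤ (S.card : ℝ) * q^(n+1) := by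
          rw [Finset.sum_congr rfl fun x hx => Finset.sum_ite_eq S x (fun _ => q^(n+1)) ]
          rw [Finset.sum_congr rfl fun x hx => if_pos hx]
          rw [Finset.sum_const]
          simp
  -- Combine
  rw [hE]
  have hTsub : ∑ y ∈ T, (∑ x ∈ S, f x y)^2 ≤ ∑ y : Fin (n+2) → 𝔽, (∑ x ∈ S, f x y)^2 :=
    Finset.sum_le_sum_of_subset_of_nonneg (Finset.subset_univ T) (fun y _ _ => sq_nonneg _)
  have hCS : (∑ y ∈ T, ∑ x ∈ S, f x y)^2 ≤ (T.card : ℝ) * ((S.card : ℝ) * q^(n+1)) := by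
    calc (∑ y ∈ T, ∑ x ∈ S, f x y)^2 ≤ (T.card : ℝ) * ∑ y ∈ T, (∑ x ∈ S, f x y)^2 :=
          sq_sum_le_card_mul_sum_sq
      _ ≤ (T.card : ℝ) * ((S.card : ℝ) * q^(n+1)) := by
          refine mul_le_mul_of_nonneg_left (le_trans hTsub hsq) (by positivity)
  have habs : |∑ y ∈ T, ∑ x ∈ S, f x y| ≤ Real.sqrt ((T.card : ℝ) * ((S.card : ℝ) * q^(n+1))) := by
    rw [← Real.sqrt_sq_eq_abs]
    exact Real.sqrt_le_sqrt hCS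
  refine habs.trans (le_of_eq ?_)
  rw [show (T.card : ℝ) * ((S.card : ℝ) * q^(n+1)) = q^(n+1) * ((S.card : ℝ) * T.card) by ring]
  rw [Real.sqrt_mul (by positivity)]

/-- Expander mixing for `Γ_{q,k-1}`: for all `S ⊆ X = 𝔽²` and
`T ⊆ Y = 𝔽^{k-1}`, the number of edges between `S` and `T` satisfies
`|e(S,T) - |S|·|T|/q| ≤ q^{(k-2)/2} · √(|S|·|T|)`. -/
theorem statement10 (k q : ℕ) (hk : 3 ≤ k)
    (𝔽 : Type) [Field 𝔽] [Fintype 𝔽] [DecidableEq 𝔽] (hq : Fintype.card 𝔽 = q)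
    (S : Finset (𝔽 × 𝔽)) (T : Finset (Fin (k - 1) → 𝔽)) :
    |((((S ×ˢ T).filter fun p =>
          p.1.2 = ∑ i : Fin (k - 1), p.2 i * p.1.1 ^ (i : ℕ)).card : ℝ)
        - (S.card : ℝ) * T.card / q)| ≤
      Real.sqrt ((q : ℝ) ^ (k - 2)) * Real.sqrt ((S.card : ℝ) * T.card) := by
  subst hq
  obtain ⟨n, rfl⟩ : ∃ n, k = n + 3 := ⟨k - 3, by omega⟩
  exact st10_main n 𝔽 S T
end

section
/- Let k ≥ 3 be an integer, let 𝔽 be a finite field of order q, and let S ⊆ X = 𝔽² be nonempty with |S| = rq (so r = |S|/q > 0 is a real number). For 0 < δ < 1, let Y_δ be the set of all y ∈ Y = 𝔽^{k−1} such that (1−δ)r ≤ |N(y) ∩ S| ≤ (1+δ)r, where N(y) denotes the neighborhood of y in Γ_{q,k−1}. Then |Y_δ| ≥ (1 − 2/(δ²r))·q^{k−1}. -/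
open Finset

lemma cardA {𝔽 : Type} [Field 𝔽] [Fintype 𝔽] [DecidableEq 𝔽] (n : ℕ) (a b : 𝔽) :
    ((univ : Finset (Fin (n+1) → 𝔽)).filter fun y => ∑ i : Fin (n+1), y i * a ^ (i:ℕ) = b).card
      = Fintype.card 𝔽 ^ n := by
  have key : ∀ (c : 𝔽) (z : Fin n → 𝔽),
      ∑ i : Fin (n+1), (Fin.cons c z : Fin (n+1) → 𝔽) i * a ^ (i:ℕ)
        = c + ∑ i : Fin n, z i * a ^ ((i:ℕ)+1) := by
    intro c z
    rw [Fin.sum_univ_succ]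
    simp [Fin.val_succ]
  have : ((univ : Finset (Fin (n+1) → 𝔽)).filter fun y => ∑ i : Fin (n+1), y i * a ^ (i:ℕ) = b).card
      = (univ : Finset (Fin n → 𝔽)).card := by
    apply Finset.card_bij' (fun y _ => Fin.tail y)
      (fun z _ => (Fin.cons (b - ∑ i : Fin n, z i * a ^ ((i:ℕ)+1)) z : Fin (n+1) → 𝔽))
    · intro y hy; exact mem_univ _
    · intro z hz
      simp only [mem_filter, mem_univ, true_and]
      rw [key]; ring
    · intro y hy
      simp only [mem_filter, mem_univ, true_and] at hy
      have hy' := hy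
      rw [← Fin.cons_self_tail y, key] at hy'
      have h0 : b - ∑ i : Fin n, Fin.tail y i * a ^ ((i:ℕ)+1) = y 0 := by
        have : Fin.tail y = fun i => y i.succ := rfl
        rw [this] at hy' ⊢
        linear_combination -hy'
      rw [h0]
      exact Fin.cons_self_tail y
    · intro z hz
      exact Fin.tail_cons _ _
  rw [this]
  simp


lemma cardB {𝔽 : Type} [Field 𝔽] [Fintype 𝔽] [DecidableEq 𝔽] (n : ℕ) (a a' b b' : 𝔽)
    (ha : a ≠ a') :
    ((univ : Finset (Fin (n+2) → 𝔽)).filter fun y =>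
        (∑ i : Fin (n+2), y i * a ^ (i:ℕ) = b) ∧ (∑ i : Fin (n+2), y i * a' ^ (i:ℕ) = b')).card
      = Fintype.card 𝔽 ^ n := by
  have hsub : a - a' ≠ 0 := sub_ne_zero.mpr ha
  have key : ∀ (c d : 𝔽) (z : Fin n → 𝔽) (t : 𝔽),
      ∑ i : Fin (n+2), (Fin.cons c (Fin.cons d z) : Fin (n+2) → 𝔽) i * t ^ (i:ℕ)
        = c + d * t + ∑ i : Fin n, z i * t ^ ((i:ℕ)+2) := by
    intro c d z t
    rw [Fin.sum_univ_succ, Fin.sum_univ_succ]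
    simp only [Fin.cons_zero, Fin.cons_succ, Fin.val_succ, Fin.val_zero, pow_zero, mul_one,
      zero_add, pow_one, ← add_assoc]
  -- helper: the inverse map
  set y1 : (Fin n → 𝔽) → 𝔽 := fun z =>
    (b - b' - ((∑ i : Fin n, z i * a ^ ((i:ℕ)+2)) - ∑ i : Fin n, z i * a' ^ ((i:ℕ)+2))) / (a - a')
    with hy1def
  set y0 : (Fin n → 𝔽) → 𝔽 := fun z =>
    b - y1 z * a - ∑ i : Fin n, z i * a ^ ((i:ℕ)+2) with hy0def
  have : ((univ : Finset (Fin (n+2) → 𝔽)).filter fun y =>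
        (∑ i : Fin (n+2), y i * a ^ (i:ℕ) = b) ∧ (∑ i : Fin (n+2), y i * a' ^ (i:ℕ) = b')).card
      = (univ : Finset (Fin n → 𝔽)).card := by
    apply Finset.card_bij' (fun y _ => Fin.tail (Fin.tail y))
      (fun z _ => (Fin.cons (y0 z) (Fin.cons (y1 z) z) : Fin (n+2) → 𝔽))
    · intro y hy; exact mem_univ _
    · intro z hz
      simp only [mem_filter, mem_univ, true_and]
      constructor
      · rw [key]; simp only [hy0def]; ring
      · rw [key]
        simp only [hy0def, hy1def]
        field_simp
        ring
    · intro y hy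
      simp only [mem_filter, mem_univ, true_and] at hy
      obtain ⟨h1, h2⟩ := hy
      rw [← Fin.cons_self_tail y, ← Fin.cons_self_tail (Fin.tail y), key] at h1 h2
      have htt : Fin.tail (Fin.tail y) = fun i => y i.succ.succ := rfl
      have ht0 : Fin.tail y 0 = y 1 := rfl
      rw [htt, ht0] at h1 h2
      have e1 : y1 (fun i => y i.succ.succ) = y 1 := by
        rw [hy1def]
        simp only
        rw [div_eq_iff hsub]
        linear_combination h2 - h1
      have e0 : y0 (fun i => y i.succ.succ) = y 0 := by
        rw [hy0def]
        simp only [e1]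
        linear_combination -h1
      rw [htt, e1, e0, ← htt, ← ht0, Fin.cons_self_tail, Fin.cons_self_tail]
    · intro z hz
      rw [Fin.tail_cons, Fin.tail_cons]
  rw [this]
  simp


theorem aux11 (n : ℕ) (𝔽 : Type) [Field 𝔽] [Fintype 𝔽] [DecidableEq 𝔽]
    (q : ℕ) (hq : Fintype.card 𝔽 = q)
    (S : Finset (𝔽 × 𝔽)) (hS : S.Nonempty)
    (r : ℝ) (hr : r = (S.card : ℝ) / q)
    (δ : ℝ) (hδ₀ : 0 < δ) (hδ₁ : δ < 1)
    (cardA : ∀ (a b : 𝔽), ((univ : Finset (Fin (n+2) → 𝔽)).filter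
        fun y => ∑ i : Fin (n+2), y i * a ^ (i:ℕ) = b).card = q ^ (n+1))
    (cardB : ∀ (a a' b b' : 𝔽), a ≠ a' →
      ((univ : Finset (Fin (n+2) → 𝔽)).filter fun y =>
        (∑ i : Fin (n+2), y i * a ^ (i:ℕ) = b) ∧
        (∑ i : Fin (n+2), y i * a' ^ (i:ℕ) = b')).card = q ^ n) :
    (1 - 2 / (δ ^ 2 * r)) * (q : ℝ) ^ (n+2) ≤
      (((Finset.univ : Finset (Fin (n+2) → 𝔽)).filter fun y =>
          (1 - δ) * r ≤
            ((S.filter fun x =>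
              x.2 = ∑ i : Fin (n+2), y i * x.1 ^ (i : ℕ)).card : ℝ) ∧
          ((S.filter fun x =>
              x.2 = ∑ i : Fin (n+2), y i * x.1 ^ (i : ℕ)).card : ℝ) ≤
            (1 + δ) * r).card : ℝ) := by
  classical
  have hq1 : 1 < q := by rw [← hq]; exact Fintype.one_lt_card
  have hq0 : (0:ℝ) < q := by positivity
  have hs0 : (0:ℝ) < S.card := by exact_mod_cast Finset.card_pos.mpr hS
  have hr0 : 0 < r := by rw [hr]; positivity
  set D : (Fin (n+2) → 𝔽) → ℕ := fun y =>
    (S.filter fun x => x.2 = ∑ i : Fin (n+2), y i * x.1 ^ (i:ℕ)).card with hD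
  -- sum of degrees
  have sum1 : ∑ y : Fin (n+2) → 𝔽, D y = S.card * q ^ (n+1) := by
    calc ∑ y : Fin (n+2) → 𝔽, D y
        = ∑ y : Fin (n+2) → 𝔽, ∑ x ∈ S,
            if x.2 = ∑ i : Fin (n+2), y i * x.1 ^ (i:ℕ) then 1 else 0 := by
          exact Finset.sum_congr rfl fun y _ => Finset.card_filter _ _
      _ = ∑ x ∈ S, ∑ y : Fin (n+2) → 𝔽,
            if x.2 = ∑ i : Fin (n+2), y i * x.1 ^ (i:ℕ) then 1 else 0 := Finset.sum_comm
      _ = ∑ x ∈ S, q ^ (n+1) := by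
          refine Finset.sum_congr rfl fun x _ => ?_
          rw [← Finset.card_filter]
          rw [Finset.filter_congr (fun y _ => (eq_comm :
            (x.2 = ∑ i : Fin (n+2), y i * x.1 ^ (i:ℕ)) ↔ _))]
          exact cardA x.1 x.2
      _ = S.card * q ^ (n+1) := by rw [Finset.sum_const, smul_eq_mul]
  -- second moment
  have sum2 : ∑ y : Fin (n+2) → 𝔽, D y * D y
      ≤ S.card * S.card * q ^ n + S.card * q ^ (n+1) := by
    have expand : ∀ y : Fin (n+2) → 𝔽, D y * D y
        = ∑ x ∈ S, ∑ x' ∈ S,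
            if (x.2 = ∑ i : Fin (n+2), y i * x.1 ^ (i:ℕ)) ∧
               (x'.2 = ∑ i : Fin (n+2), y i * x'.1 ^ (i:ℕ)) then 1 else 0 := by
      intro y
      rw [hD]
      simp only [Finset.card_filter, Finset.sum_mul_sum]
      refine Finset.sum_congr rfl fun x _ => Finset.sum_congr rfl fun x' _ => ?_
      by_cases h1 : x.2 = ∑ i : Fin (n+2), y i * x.1 ^ (i:ℕ) <;>
        by_cases h2 : x'.2 = ∑ i : Fin (n+2), y i * x'.1 ^ (i:ℕ) <;>
        simp [h1, h2]
    have bound : ∀ x ∈ S, ∀ x' ∈ S,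
        (∑ y : Fin (n+2) → 𝔽,
          if (x.2 = ∑ i : Fin (n+2), y i * x.1 ^ (i:ℕ)) ∧
             (x'.2 = ∑ i : Fin (n+2), y i * x'.1 ^ (i:ℕ)) then 1 else 0)
          ≤ q ^ n + (if x = x' then q ^ (n+1) else 0) := by
      intro x _ x' _
      rw [← Finset.card_filter]
      by_cases hxx : x = x'
      · subst hxx
        rw [if_pos rfl]
        rw [Finset.filter_congr (fun y _ => (and_self_iff :
            ((x.2 = ∑ i : Fin (n+2), y i * x.1 ^ (i:ℕ)) ∧ _) ↔ _))]
        rw [Finset.filter_congr (fun y _ => (eq_comm :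
            (x.2 = ∑ i : Fin (n+2), y i * x.1 ^ (i:ℕ)) ↔ _))]
        rw [cardA x.1 x.2]
        exact Nat.le_add_left _ _
      · simp only [if_neg hxx, add_zero]
        by_cases hx1 : x.1 = x'.1
        · have hx2 : x.2 ≠ x'.2 := by
            intro h; exact hxx (Prod.ext hx1 h)
          have : ((univ : Finset (Fin (n+2) → 𝔽)).filter fun y =>
              (x.2 = ∑ i : Fin (n+2), y i * x.1 ^ (i:ℕ)) ∧
              (x'.2 = ∑ i : Fin (n+2), y i * x'.1 ^ (i:ℕ))) = ∅ := by
            rw [Finset.filter_eq_empty_iff]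
            rintro y - ⟨h1, h2⟩
            rw [hx1] at h1
            exact hx2 (h1.trans h2.symm)
          rw [this]
          simp
        · have hfe : ((univ : Finset (Fin (n+2) → 𝔽)).filter fun y =>
              (x.2 = ∑ i : Fin (n+2), y i * x.1 ^ (i:ℕ)) ∧
              (x'.2 = ∑ i : Fin (n+2), y i * x'.1 ^ (i:ℕ)))
              = ((univ : Finset (Fin (n+2) → 𝔽)).filter fun y =>
              (∑ i : Fin (n+2), y i * x.1 ^ (i:ℕ) = x.2) ∧
              (∑ i : Fin (n+2), y i * x'.1 ^ (i:ℕ) = x'.2)) :=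
            Finset.filter_congr (fun y _ => and_congr eq_comm eq_comm)
          rw [hfe, cardB x.1 x'.1 x.2 x'.2 hx1]
    calc ∑ y : Fin (n+2) → 𝔽, D y * D y
        = ∑ x ∈ S, ∑ x' ∈ S, ∑ y : Fin (n+2) → 𝔽,
            if (x.2 = ∑ i : Fin (n+2), y i * x.1 ^ (i:ℕ)) ∧
               (x'.2 = ∑ i : Fin (n+2), y i * x'.1 ^ (i:ℕ)) then 1 else 0 := by
          rw [Finset.sum_congr rfl fun y _ => expand y]
          rw [Finset.sum_comm]
          exact Finset.sum_congr rfl fun x _ => Finset.sum_comm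
      _ ≤ ∑ x ∈ S, ∑ x' ∈ S, (q ^ n + (if x = x' then q ^ (n+1) else 0)) := by
          refine Finset.sum_le_sum fun x hx => Finset.sum_le_sum fun x' hx' => ?_
          exact bound x hx x' hx'
      _ = S.card * S.card * q ^ n + S.card * q ^ (n+1) := by
          have hrow : ∀ x ∈ S, ∑ x' ∈ S, (q ^ n + (if x = x' then q ^ (n+1) else 0))
              = S.card * q ^ n + q ^ (n+1) := by
            intro x hx
            rw [Finset.sum_add_distrib, Finset.sum_const, smul_eq_mul,
              Finset.sum_ite_eq, if_pos hx]
          rw [Finset.sum_congr rfl hrow, Finset.sum_const, smul_eq_mul]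
          ring
  -- real-valued variance bound
  have hcard_univ : ((univ : Finset (Fin (n+2) → 𝔽)).card) = q ^ (n+2) := by
    rw [Finset.card_univ, Fintype.card_fun, hq, Fintype.card_fin]
  have hsq : (S.card : ℝ) = r * q := by
    rw [hr]; field_simp
  have hvar : ∑ y : Fin (n+2) → 𝔽, ((D y : ℝ) - r)^2 ≤ (S.card : ℝ) * (q:ℝ) ^ (n+1) := by
    have e : ∑ y : Fin (n+2) → 𝔽, ((D y : ℝ) - r)^2
        = (∑ y : Fin (n+2) → 𝔽, (D y : ℝ) * (D y : ℝ))
          - 2 * r * (∑ y : Fin (n+2) → 𝔽, (D y : ℝ)) + (q:ℝ)^(n+2) * r^2 := by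
      have expand : ∀ y : Fin (n+2) → 𝔽,
          ((D y : ℝ) - r)^2 = (D y : ℝ) * (D y : ℝ) - 2 * r * (D y : ℝ) + r^2 :=
        fun y => by ring
      rw [Finset.sum_congr rfl fun y _ => expand y]
      rw [Finset.sum_add_distrib, Finset.sum_sub_distrib, ← Finset.mul_sum,
        Finset.sum_const, hcard_univ, nsmul_eq_mul]
      push_cast
      ring
    have c1 : (∑ y : Fin (n+2) → 𝔽, (D y : ℝ)) = (S.card : ℝ) * (q:ℝ) ^ (n+1) := by
      rw [← Nat.cast_sum, sum1]; push_cast; ring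
    have c2 : (∑ y : Fin (n+2) → 𝔽, (D y : ℝ) * (D y : ℝ))
        ≤ (S.card:ℝ) * (S.card:ℝ) * (q:ℝ)^n + (S.card:ℝ) * (q:ℝ)^(n+1) := by
      have h : ((∑ y : Fin (n+2) → 𝔽, D y * D y : ℕ) : ℝ)
          ≤ ((S.card * S.card * q^n + S.card * q^(n+1) : ℕ) : ℝ) := Nat.cast_le.mpr sum2
      push_cast at h
      exact h
    have harith : (S.card:ℝ)*(S.card:ℝ)*(q:ℝ)^n + (S.card:ℝ)*(q:ℝ)^(n+1)
        - 2*r*((S.card:ℝ)*(q:ℝ)^(n+1)) + (q:ℝ)^(n+2)*r^2 = (S.card:ℝ)*(q:ℝ)^(n+1) := by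
      rw [hsq]; ring
    rw [e, c1]
    linarith [c2]
  -- Chebyshev
  set T := ((univ : Finset (Fin (n+2) → 𝔽)).filter fun y =>
      (1 - δ) * r ≤ (D y : ℝ) ∧ (D y : ℝ) ≤ (1 + δ) * r) with hT
  have hbad : ∀ y ∈ (univ : Finset (Fin (n+2) → 𝔽)) \ T, δ^2 * r^2 ≤ ((D y : ℝ) - r)^2 := by
    intro y hy
    rw [Finset.mem_sdiff, hT, Finset.mem_filter] at hy
    have hc : ¬((1 - δ) * r ≤ (D y : ℝ) ∧ (D y : ℝ) ≤ (1 + δ) * r) := by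
      intro h; exact hy.2 ⟨hy.1, h⟩
    rcases not_and_or.mp hc with h | h
    · push_neg at h
      have h1 : δ * r < r - (D y : ℝ) := by nlinarith
      have h0 : (0:ℝ) ≤ δ * r := by positivity
      have h2 := mul_self_le_mul_self h0 h1.le
      nlinarith [h2]
    · push_neg at h
      have h1 : δ * r < (D y : ℝ) - r := by nlinarith
      have h0 : (0:ℝ) ≤ δ * r := by positivity
      have h2 := mul_self_le_mul_self h0 h1.le
      nlinarith [h2]
  have hBsum : (((univ : Finset (Fin (n+2) → 𝔽)) \ T).card : ℝ) * (δ^2 * r^2)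
      ≤ ∑ y : Fin (n+2) → 𝔽, ((D y : ℝ) - r)^2 := by
    calc (((univ : Finset (Fin (n+2) → 𝔽)) \ T).card : ℝ) * (δ^2 * r^2)
        = ∑ _y ∈ (univ : Finset (Fin (n+2) → 𝔽)) \ T, δ^2 * r^2 := by
          rw [Finset.sum_const, nsmul_eq_mul]
      _ ≤ ∑ y ∈ (univ : Finset (Fin (n+2) → 𝔽)) \ T, ((D y : ℝ) - r)^2 :=
          Finset.sum_le_sum hbad
      _ ≤ ∑ y : Fin (n+2) → 𝔽, ((D y : ℝ) - r)^2 :=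
          Finset.sum_le_sum_of_subset_of_nonneg (Finset.sdiff_subset)
            (fun y _ _ => sq_nonneg _)
  have hA : (0:ℝ) < δ^2 * r := by positivity
  have hQ : (0:ℝ) < (q:ℝ)^(n+2) := by positivity
  have hB : ((((univ : Finset (Fin (n+2) → 𝔽)) \ T).card : ℝ)) * (δ^2 * r)
      ≤ (q:ℝ)^(n+2) := by
    have h1 : (((univ : Finset (Fin (n+2) → 𝔽)) \ T).card : ℝ) * (δ^2 * r^2)
        ≤ r * (q:ℝ)^(n+2) := by
      refine hBsum.trans (hvar.trans (le_of_eq ?_))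
      rw [hsq]; ring
    have h2 : (((univ : Finset (Fin (n+2) → 𝔽)) \ T).card : ℝ) * (δ^2 * r) * r
        ≤ (q:ℝ)^(n+2) * r := by nlinarith
    exact le_of_mul_le_mul_right h2 hr0
  have hTcard : (T.card : ℝ)
      = (q:ℝ)^(n+2) - (((univ : Finset (Fin (n+2) → 𝔽)) \ T).card : ℝ) := by
    have hsub : T ⊆ univ := Finset.subset_univ T
    have := Finset.card_sdiff_of_subset hsub
    have hle : T.card ≤ (univ : Finset (Fin (n+2) → 𝔽)).card := Finset.card_le_card hsub
    rw [this, Nat.cast_sub hle, hcard_univ]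
    push_cast
    ring
  have hgoal : (1 - 2 / (δ ^ 2 * r)) * (q : ℝ) ^ (n+2) ≤ (T.card : ℝ) := by
    rw [hTcard]
    have hB' : (((univ : Finset (Fin (n+2) → 𝔽)) \ T).card : ℝ)
        ≤ (q:ℝ)^(n+2) / (δ^2 * r) := by
      rw [le_div_iff₀ hA] at *
      exact hB
    have h2A : (q:ℝ)^(n+2) / (δ^2 * r) ≤ 2 / (δ ^ 2 * r) * (q:ℝ)^(n+2) := by
      rw [div_mul_eq_mul_div, div_le_div_iff₀ hA hA]
      nlinarith
    have hexp : (1 - 2 / (δ ^ 2 * r)) * (q:ℝ)^(n+2)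
        = (q:ℝ)^(n+2) - 2 / (δ ^ 2 * r) * (q:ℝ)^(n+2) := by ring
    linarith [hB'.trans h2A]
  exact hgoal

/-- Let `S ⊆ X = 𝔽²` be nonempty, `r = |S|/q`, and `0 < δ < 1`.
The set `Y_δ` of all `y ∈ Y = 𝔽^{k-1}` with `(1-δ)r ≤ |N(y) ∩ S| ≤ (1+δ)r`
satisfies `|Y_δ| ≥ (1 - 2/(δ²r)) · q^{k-1}`. -/
theorem statement11 (k q : ℕ) (hk : 3 ≤ k)
    (𝔽 : Type) [Field 𝔽] [Fintype 𝔽] [DecidableEq 𝔽] (hq : Fintype.card 𝔽 = q)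
    (S : Finset (𝔽 × 𝔽)) (hS : S.Nonempty)
    (r : ℝ) (hr : r = (S.card : ℝ) / q)
    (δ : ℝ) (hδ₀ : 0 < δ) (hδ₁ : δ < 1) :
    (1 - 2 / (δ ^ 2 * r)) * (q : ℝ) ^ (k - 1) ≤
      (((Finset.univ : Finset (Fin (k - 1) → 𝔽)).filter fun y =>
          (1 - δ) * r ≤
            ((S.filter fun x =>
              x.2 = ∑ i : Fin (k - 1), y i * x.1 ^ (i : ℕ)).card : ℝ) ∧
          ((S.filter fun x =>
              x.2 = ∑ i : Fin (k - 1), y i * x.1 ^ (i : ℕ)).card : ℝ) ≤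
            (1 + δ) * r).card : ℝ) := by
  obtain ⟨n, hn⟩ : ∃ n, k - 1 = n + 2 := ⟨k - 3, by omega⟩
  rw [hn]
  refine aux11 n 𝔽 q hq S hS r hr δ hδ₀ hδ₁ (fun a b => ?_) (fun a a' b b' ha => ?_)
  · rw [← hq]; exact cardA (n+1) a b
  · rw [← hq]; exact cardB n a a' b b' ha
end

section
/- For every integer k ≥ 3, the k-uniform hypergraph F_{2k−1} is slowly growing and non-degenerate. -/
open Finset

section statement17aux

lemma subset_foldr_of_mem {α : Type*} [DecidableEq α] (L : List (Finset α)) {a : Finset α}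
    (h : a ∈ L) : a ⊆ L.foldr (· ∪ ·) ∅ := by
  induction L with
  | nil => simp at h
  | cons b L ih =>
    rcases List.mem_cons.1 h with rfl | h
    · exact Finset.subset_union_left
    · exact (ih h).trans Finset.subset_union_right

end statement17aux

/-- For every `k ≥ 3`, the `k`-uniform hypergraph `F_{2k-1}` is slowly
growing and non-degenerate (not `k`-partite). -/
theorem statement17 (k : ℕ) (hk : 3 ≤ k) :
    SlowlyGrowing (Fodd k) ∧ ¬ KPartite k (Fodd k) := by
  have hk1 : 2 ≤ k - 1 := by omega
  set V : Finset (Fin (k - 1) ⊕ Fin k) := (univ : Finset (Fin (k - 1))).image Sum.inl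
    with hVdef
  set E : Fin (k - 1) → Finset (Fin (k - 1) ⊕ Fin k) :=
    fun i => insert (Sum.inr (Fin.castLE (Nat.sub_le k 1) i)) V with hEdef
  set W : Finset (Fin (k - 1) ⊕ Fin k) := (univ : Finset (Fin k)).image Sum.inr with hWdef
  have hFodd : Fodd k = univ.image E ∪ {W} := rfl
  have hinrV : ∀ y : Fin k, Sum.inr y ∉ V := by simp [hVdef]
  have hcastinj : ∀ i j : Fin (k - 1),
      Fin.castLE (Nat.sub_le k 1) i = Fin.castLE (Nat.sub_le k 1) j → i = j := by
    intro i j h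
    have := congrArg Fin.val h
    simp at this
    exact Fin.ext this
  have hEinj : Function.Injective E := by
    intro i j h
    have hm : Sum.inr (Fin.castLE (Nat.sub_le k 1) i) ∈ E j := by
      rw [← h]; exact mem_insert_self _ _
    rcases mem_insert.1 hm with h' | h'
    · exact hcastinj _ _ (Sum.inr_injective h')
    · exact absurd h' (hinrV _)
  have hWneE : ∀ i, W ≠ E i := by
    intro i h
    have : Sum.inl (⟨0, by omega⟩ : Fin (k - 1)) ∈ W := by
      rw [h]
      exact mem_insert_of_mem (mem_image_of_mem _ (mem_univ _))
    simp [hWdef] at this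
  constructor
  · refine ⟨List.ofFn E ++ [W], ?_, ?_, ?_⟩
    · refine List.Nodup.append (List.nodup_ofFn.2 hEinj) (List.nodup_singleton _) ?_
      intro a ha hb
      simp only [List.mem_ofFn, Set.mem_range] at ha
      simp only [List.mem_singleton] at hb
      obtain ⟨i, rfl⟩ := ha
      exact hWneE i hb.symm
    · rw [hFodd]
      ext e
      simp [List.mem_ofFn, eq_comm]
    · intro i hi h1
      have hlen : (List.ofFn E ++ [W]).length = (k - 1) + 1 := by simp
      set U := ((List.ofFn E ++ [W]).take i).foldr (· ∪ ·) ∅ with hU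
      have hilen : i < (k - 1) + 1 := by rwa [hlen] at hi
      have h0lt : 0 < ((List.ofFn E ++ [W]).take i).length := by
        simp only [List.length_take, hlen]
        omega
      have hE0 : ((List.ofFn E ++ [W]).take i)[0]'h0lt = E ⟨0, by omega⟩ := by
        rw [List.getElem_take]
        rw [List.getElem_append_left (by simp; omega)]
        simp
      have hE0mem : E ⟨0, by omega⟩ ∈ (List.ofFn E ++ [W]).take i := hE0 ▸ List.getElem_mem _
      have hVU : V ⊆ U := (subset_insert _ _).trans (subset_foldr_of_mem _ hE0mem)
      rcases lt_or_eq_of_le (Nat.lt_succ_iff.1 hilen) with hlt | heq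
      · have hget : (List.ofFn E ++ [W]).get ⟨i, hi⟩ = E ⟨i, hlt⟩ := by
          rw [List.get_eq_getElem, List.getElem_append_left (by simpa using hlt)]
          simp
        rw [hget]
        have hsub : E ⟨i, hlt⟩ \ U ⊆ {Sum.inr (Fin.castLE (Nat.sub_le k 1) ⟨i, hlt⟩)} := by
          intro x hx
          rw [mem_sdiff] at hx
          rcases mem_insert.1 hx.1 with h' | h'
          · simp [h']
          · exact absurd (hVU h') hx.2
        calc (E ⟨i, hlt⟩ \ U).card ≤ _ := card_le_card hsub
          _ = 1 := card_singleton _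
      · subst heq
        have hget : (List.ofFn E ++ [W]).get ⟨k - 1, hi⟩ = W := by
          rw [List.get_eq_getElem, List.getElem_append_right (by simp)]
          simp
        rw [hget]
        have htake : (List.ofFn E ++ [W]).take (k - 1) = List.ofFn E := by
          rw [List.take_left' (by simp)]
        have hallE : ∀ j : Fin (k - 1), E j ⊆ U := by
          intro j
          apply subset_foldr_of_mem
          rw [htake]
          simp [List.mem_ofFn]
        have hsub : W \ U ⊆ {Sum.inr (⟨k - 1, by omega⟩ : Fin k)} := by
          intro x hx
          rw [mem_sdiff] at hx
          obtain ⟨y, -, rfl⟩ := mem_image.1 hx.1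
          by_cases hy : (y : ℕ) < k - 1
          · exfalso
            apply hx.2
            apply hallE ⟨y, hy⟩
            have : (Sum.inr y : Fin (k - 1) ⊕ Fin k) =
                Sum.inr (Fin.castLE (Nat.sub_le k 1) ⟨y, hy⟩) := by
              congr 1
            rw [this]
            exact mem_insert_self _ _
          · have hyk : (y : ℕ) = k - 1 := by omega
            have hy2 : y = ⟨k - 1, by omega⟩ := Fin.ext (by simpa using hyk)
            simp [hy2]
        calc (W \ U).card ≤ _ := card_le_card hsub
          _ = 1 := card_singleton _
  · rintro ⟨f, hf⟩
    have hEmem : ∀ i, E i ∈ Fodd k := by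
      intro i
      rw [hFodd]
      exact mem_union_left _ (mem_image_of_mem _ (mem_univ i))
    have hWmem : W ∈ Fodd k := by
      rw [hFodd]
      exact mem_union_right _ (mem_singleton_self _)
    have himage : ∀ e ∈ Fodd k, e.image f = univ := by
      intro e he
      apply eq_univ_of_forall
      intro i
      have hc := hf e he i
      obtain ⟨x, hx⟩ := card_pos.1 (by rw [hc]; norm_num)
      rw [mem_filter] at hx
      exact mem_image.2 ⟨x, hx.1, hx.2⟩
    have hVcard : V.card = k - 1 := by
      rw [hVdef, card_image_of_injective _ Sum.inl_injective, card_univ, Fintype.card_fin]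
    set S := V.image f with hSdef
    have hScard : S.card ≤ k - 1 := le_trans card_image_le (le_of_eq hVcard)
    have hnotS : ∀ i : Fin (k - 1), f (Sum.inr (Fin.castLE (Nat.sub_le k 1) i)) ∉ S := by
      intro i hmem
      have h1 : (E i).image f = univ := himage _ (hEmem i)
      rw [hEdef] at h1
      simp only [image_insert] at h1
      rw [insert_eq_self.2 hmem] at h1
      have := congrArg Finset.card h1
      rw [card_univ, Fintype.card_fin] at this
      omega
    have key : ∀ i j : Fin (k - 1),
        f (Sum.inr (Fin.castLE (Nat.sub_le k 1) i)) =
          f (Sum.inr (Fin.castLE (Nat.sub_le k 1) j)) := by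
      intro i j
      have h1 : (E j).image f = univ := himage _ (hEmem j)
      rw [hEdef] at h1
      simp only [image_insert] at h1
      have hmem : f (Sum.inr (Fin.castLE (Nat.sub_le k 1) i)) ∈
          insert (f (Sum.inr (Fin.castLE (Nat.sub_le k 1) j))) S := by
        rw [h1]; exact mem_univ _
      rcases mem_insert.1 hmem with h | h
      · exact h
      · exact absurd h (hnotS i)
    set i0 : Fin (k - 1) := ⟨0, by omega⟩ with hi0
    set i1 : Fin (k - 1) := ⟨1, by omega⟩ with hi1
    set t := f (Sum.inr (Fin.castLE (Nat.sub_le k 1) i0)) with ht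
    have hcard := hf W hWmem t
    have hne : Sum.inr (Fin.castLE (Nat.sub_le k 1) i0) ≠
        (Sum.inr (Fin.castLE (Nat.sub_le k 1) i1) : Fin (k - 1) ⊕ Fin k) := by
      intro h
      have := hcastinj _ _ (Sum.inr_injective h)
      simp [hi0, hi1, Fin.ext_iff] at this
    have hsub : ({Sum.inr (Fin.castLE (Nat.sub_le k 1) i0),
        Sum.inr (Fin.castLE (Nat.sub_le k 1) i1)} : Finset (Fin (k - 1) ⊕ Fin k)) ⊆
        W.filter (fun v => f v = t) := by
      intro x hx
      rw [mem_insert, mem_singleton] at hx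
      rw [mem_filter]
      rcases hx with rfl | rfl
      · exact ⟨mem_image_of_mem _ (mem_univ _), rfl⟩
      · exact ⟨mem_image_of_mem _ (mem_univ _), (key i1 i0)⟩
    have h2 : 2 ≤ (W.filter (fun v => f v = t)).card := by
      calc 2 = ({Sum.inr (Fin.castLE (Nat.sub_le k 1) i0),
          Sum.inr (Fin.castLE (Nat.sub_le k 1) i1)} : Finset (Fin (k - 1) ⊕ Fin k)).card := by
            rw [card_insert_of_notMem (by simpa using hne), card_singleton]
        _ ≤ _ := card_le_card hsub
    omega
end

section
/- Every 3-uniform Berge triangle is isomorphic to exactly one of the following four 3-uniform hypergraphs: the loose cycle LC₃ with edges {1,2,3}, {3,4,5}, {5,6,1}; the tight path TP₃ with edges {1,2,3}, {2,3,4}, {3,4,5}; F₅ with edges {1,2,3}, {1,2,4}, {3,4,5}; and K₄^{3−} with edges {1,2,3}, {1,2,4}, {1,3,4}. -/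
open Finset

/-- Two hypergraphs (given by their edge sets) are isomorphic: there is a bijection
between the vertex sets inducing a bijection between the edge sets. -/
def HGIso {U W : Type*} [DecidableEq U] [DecidableEq W]
    (FE : Finset (Finset U)) (GE : Finset (Finset W)) : Prop :=
  ∃ φ : U ≃ W, ∀ e : Finset U, e ∈ FE ↔ e.image φ ∈ GE

/-- A 3-uniform Berge triangle: a 3-uniform hypergraph with exactly three distinct
edges `e₁, e₂, e₃` such that there are three distinct vertices `x, y, z` with
`{x,y} ⊆ e₁`, `{y,z} ⊆ e₂` and `{x,z} ⊆ e₃`. -/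
def IsBergeTriangle {U : Type*} [DecidableEq U] (FE : Finset (Finset U)) : Prop :=
  IsKUniform 3 FE ∧
  ∃ e₁ e₂ e₃ : Finset U, e₁ ≠ e₂ ∧ e₁ ≠ e₃ ∧ e₂ ≠ e₃ ∧ FE = {e₁, e₂, e₃} ∧
    ∃ x y z : U, x ≠ y ∧ y ≠ z ∧ x ≠ z ∧
      x ∈ e₁ ∧ y ∈ e₁ ∧ y ∈ e₂ ∧ z ∈ e₂ ∧ x ∈ e₃ ∧ z ∈ e₃

/-- The loose cycle `LC₃`. -/
def LC3 : Finset (Finset (Fin 6)) := {{0, 1, 2}, {2, 3, 4}, {4, 5, 0}}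

/-- The tight path `TP₃`. -/
def TP3 : Finset (Finset (Fin 5)) := {{0, 1, 2}, {1, 2, 3}, {2, 3, 4}}

/-- The hypergraph `F₅`. -/
def F5 : Finset (Finset (Fin 5)) := {{0, 1, 2}, {0, 1, 3}, {2, 3, 4}}

/-- The hypergraph `K₄^{3-}`. -/
def K4minus : Finset (Finset (Fin 4)) := {{0, 1, 2}, {0, 1, 3}, {0, 2, 3}}

/-! ### Auxiliary machinery -/

/-- Pick an element of a finite set of `Fin n` (its max, or 0 for the empty set). -/
def pick {n : ℕ} [NeZero n] (s : Finset (Fin n)) : Fin n := WithBot.unbotD 0 s.max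

/-- `f` maps the three edges `E1 E2 E3` to three distinct members of `T`. -/
def good {n k : ℕ} (T : Finset (Finset (Fin k))) (f : Fin n → Fin k)
    (E1 E2 E3 : Finset (Fin n)) : Prop :=
  E1.image f ∈ T ∧ E2.image f ∈ T ∧ E3.image f ∈ T ∧
  E1.image f ≠ E2.image f ∧ E1.image f ≠ E3.image f ∧ E2.image f ≠ E3.image f

instance {n k : ℕ} (T : Finset (Finset (Fin k))) (f : Fin n → Fin k)
    (E1 E2 E3 : Finset (Fin n)) : Decidable (good T f E1 E2 E3) := by
  unfold good; infer_instance

/-- Lexicographic comparison of triples. -/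
def lex3 {n : ℕ} (a b c d e f : Fin n) : Prop :=
  a < d ∨ (a = d ∧ (b < e ∨ (b = e ∧ c ≤ f)))

instance {n : ℕ} (a b c d e f : Fin n) : Decidable (lex3 a b c d e f) := by
  unfold lex3; infer_instance

lemma lex3_total {n : ℕ} (a b c d e f : Fin n) :
    lex3 a b c d e f ∨ lex3 d e f a b c := by
  unfold lex3
  rcases lt_trichotomy a d with h | h | h
  · exact Or.inl (Or.inl h)
  · rcases lt_trichotomy b e with h' | h' | h'
    · exact Or.inl (Or.inr ⟨h, Or.inl h'⟩)
    · rcases le_total c f with h'' | h''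
      · exact Or.inl (Or.inr ⟨h, Or.inr ⟨h', h''⟩⟩)
      · exact Or.inr (Or.inr ⟨h.symm, Or.inr ⟨h'.symm, h''⟩⟩)
    · exact Or.inr (Or.inr ⟨h.symm, Or.inl h'⟩)
  · exact Or.inr (Or.inl h)

/-- Berge triangle witness data for a triple of edges. -/
def BergeWit {n : ℕ} (A B C : Finset (Fin n)) : Prop :=
  ∃ x y z, x ≠ y ∧ y ≠ z ∧ x ≠ z ∧ x ∈ A ∧ y ∈ A ∧ y ∈ B ∧ z ∈ B ∧ x ∈ C ∧ z ∈ C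

lemma bw_swap12 {n : ℕ} {A B C : Finset (Fin n)} (h : BergeWit A B C) :
    BergeWit B A C := by
  obtain ⟨x, y, z, hxy, hyz, hxz, hx1, hy1, hy2, hz2, hx3, hz3⟩ := h
  exact ⟨z, y, x, hyz.symm, hxy.symm, hxz.symm, hz2, hy2, hy1, hx1, hz3, hx3⟩

lemma bw_swap23 {n : ℕ} {A B C : Finset (Fin n)} (h : BergeWit A B C) :
    BergeWit A C B := by
  obtain ⟨x, y, z, hxy, hyz, hxz, hx1, hy1, hy2, hz2, hx3, hz3⟩ := h
  exact ⟨y, x, z, hxy.symm, hxz, hyz, hy1, hx1, hx3, hz3, hy2, hz2⟩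

/-- Decompose a 3-element subset of `Fin n` into a sorted triple. -/
lemma exists_sorted {n : ℕ} {s : Finset (Fin n)} (h : s.card = 3) :
    ∃ a b c : Fin n, a < b ∧ b < c ∧ s = {a, b, c} := by
  obtain ⟨a, b, c, hab, hac, hbc, rfl⟩ := Finset.card_eq_three.mp h
  rcases hab.lt_or_gt with h1 | h1 <;> rcases hac.lt_or_gt with h2 | h2 <;>
    rcases hbc.lt_or_gt with h3 | h3
  · exact ⟨a, b, c, h1, h3, rfl⟩
  · exact ⟨a, c, b, h2, h3, by ext v; simp; tauto⟩
  · exact absurd (h2.trans (h1.trans h3)) (lt_irrefl _)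
  · exact ⟨c, a, b, h2, h1, by ext v; simp; tauto⟩
  · exact ⟨b, a, c, h1, h2, by ext v; simp; tauto⟩
  · exact absurd (h2.trans (h3.trans h1)) (lt_irrefl _)
  · exact ⟨b, c, a, h3, h2, by ext v; simp; tauto⟩
  · exact ⟨c, b, a, h3, h1, by ext v; simp; tauto⟩

/-- From a `good` certificate, build a hypergraph isomorphism. -/
lemma hgiso_of_good {n : ℕ} (T : Finset (Finset (Fin n))) (hT3 : T.card = 3)
    (hTcov : ∀ w : Fin n, ∃ t ∈ T, w ∈ t)
    (f : Fin n → Fin n) (E1 E2 E3 : Finset (Fin n))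
    (hg : good T f E1 E2 E3) : HGIso {E1, E2, E3} T := by
  obtain ⟨h1, h2, h3, d12, d13, d23⟩ := hg
  have hIsub : ({E1.image f, E2.image f, E3.image f} : Finset (Finset (Fin n))) ⊆ T := by
    intro t ht
    simp only [Finset.mem_insert, Finset.mem_singleton] at ht
    rcases ht with rfl | rfl | rfl <;> assumption
  have hIcard : ({E1.image f, E2.image f, E3.image f} : Finset (Finset (Fin n))).card = 3 := by
    rw [Finset.card_insert_of_notMem (by simp [d12, d13]),
      Finset.card_insert_of_notMem (by simp [d23]), Finset.card_singleton]
  have hIT : ({E1.image f, E2.image f, E3.image f} : Finset (Finset (Fin n))) = T :=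
    Finset.eq_of_subset_of_card_le hIsub (by omega)
  have hsurj : Function.Surjective f := by
    intro w
    obtain ⟨t, htT, hwt⟩ := hTcov w
    rw [← hIT] at htT
    simp only [Finset.mem_insert, Finset.mem_singleton] at htT
    rcases htT with rfl | rfl | rfl <;>
      · obtain ⟨v, _, hv⟩ := Finset.mem_image.mp hwt
        exact ⟨v, hv⟩
  have hbij : Function.Bijective f :=
    (Fintype.bijective_iff_surjective_and_card f).mpr ⟨hsurj, rfl⟩
  have hinj : Function.Injective (Finset.image f) := Finset.image_injective hbij.injective
  refine ⟨Equiv.ofBijective f hbij, fun e => ?_⟩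
  have hc : Finset.image (⇑(Equiv.ofBijective f hbij)) e = e.image f := rfl
  rw [hc, ← hIT]
  simp only [Finset.mem_insert, Finset.mem_singleton]
  constructor
  · rintro (rfl | rfl | rfl) <;> tauto
  · rintro (h' | h' | h')
    · exact Or.inl (hinj h')
    · exact Or.inr (Or.inl (hinj h'))
    · exact Or.inr (Or.inr (hinj h'))

/-- Transport a hypergraph isomorphism along an equivalence of vertex types. -/
lemma hgiso_image {U : Type} [DecidableEq U] {n k : ℕ} (g : U ≃ Fin n)
    (e1 e2 e3 : Finset U) (T : Finset (Finset (Fin k)))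
    (h : HGIso {e1.image ⇑g, e2.image ⇑g, e3.image ⇑g} T) : HGIso {e1, e2, e3} T := by
  obtain ⟨ψ, hψ⟩ := h
  refine ⟨g.trans ψ, fun e => ?_⟩
  have him : e.image ⇑(g.trans ψ) = (e.image ⇑g).image ⇑ψ := by
    rw [Equiv.coe_trans, ← Finset.image_image]
  rw [him, ← hψ (e.image ⇑g)]
  have hinj : Function.Injective (Finset.image ⇑g) := Finset.image_injective g.injective
  simp only [Finset.mem_insert, Finset.mem_singleton]
  constructor
  · rintro (rfl | rfl | rfl) <;> tauto
  · rintro (h' | h' | h')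
    · exact Or.inl (hinj h')
    · exact Or.inr (Or.inl (hinj h'))
    · exact Or.inr (Or.inr (hinj h'))

/-- Two standard hypergraphs on vertex types of different sizes are never both
isomorphic to the same hypergraph. -/
lemma not_iso_pair {U : Type} [DecidableEq U] {FE : Finset (Finset U)} {k l : ℕ}
    (hkl : k ≠ l) (T1 : Finset (Finset (Fin k))) (T2 : Finset (Finset (Fin l))) :
    ¬(HGIso FE T1 ∧ HGIso FE T2) := by
  rintro ⟨⟨φ, -⟩, ⟨ψ, -⟩⟩
  exact hkl (by simpa using Fintype.card_congr (φ.symm.trans ψ))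

/-! ### Builders for the four shapes -/

def bLC3 (E1 E2 E3 : Finset (Fin 6)) : Fin 6 → Fin 6 := fun v =>
  if v = pick (E1 ∩ E3) then 0 else if v = pick (E1 \ (E2 ∪ E3)) then 1
  else if v = pick (E1 ∩ E2) then 2 else if v = pick (E2 \ (E1 ∪ E3)) then 3
  else if v = pick (E2 ∩ E3) then 4 else 5

def bTP3 (A M B : Finset (Fin 5)) : Fin 5 → Fin 5 := fun v =>
  if v = pick (A \ (M ∪ B)) then 0 else if v = pick ((A ∩ M) \ B) then 1
  else if v = pick (A ∩ B) then 2 else if v = pick ((M ∩ B) \ A) then 3 else 4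

def bF5 (A B C : Finset (Fin 5)) : Fin 5 → Fin 5 := fun v =>
  if v = pick (A ∩ B) then 0 else if v ∈ A ∩ B then 1
  else if v = pick (A ∩ C) then 2 else if v = pick (B ∩ C) then 3 else 4

def bK4 (E1 E2 E3 : Finset (Fin 4)) : Fin 4 → Fin 4 := fun v =>
  if v = pick (E1 ∩ E2 ∩ E3) then 0 else if v ∈ E1 ∩ E2 then 1
  else if v ∈ E1 ∩ E3 then 2 else 3

/-! ### The decidable core lemmas -/

set_option synthInstance.maxSize 1000000 in
set_option synthInstance.maxHeartbeats 10000000 in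
set_option maxHeartbeats 400000000 in
set_option maxRecDepth 1000000 in
theorem key6 : ∀ a b : Fin 6, a < b → ∀ c, b < c → ∀ d e : Fin 6, d < e → ∀ f, e < f →
    lex3 a b c d e f → ¬(a = d ∧ b = e ∧ c = f) →
    ∀ g h : Fin 6, g < h → ∀ i, h < i →
    lex3 d e f g h i → ¬(a = g ∧ b = h ∧ c = i) → ¬(d = g ∧ e = h ∧ f = i) →
    ∀ x, (x = a ∨ x = b ∨ x = c) → (x = g ∨ x = h ∨ x = i) →
    ∀ y, y ≠ x → (y = a ∨ y = b ∨ y = c) → (y = d ∨ y = e ∨ y = f) →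
    ∀ z, z ≠ x → z ≠ y → (z = d ∨ z = e ∨ z = f) → (z = g ∨ z = h ∨ z = i) →
    (∀ v : Fin 6, v = a ∨ v = b ∨ v = c ∨ v = d ∨ v = e ∨ v = f ∨ v = g ∨ v = h ∨ v = i) →
    good LC3 (bLC3 {a,b,c} {d,e,f} {g,h,i}) {a,b,c} {d,e,f} {g,h,i} := by
  decide

set_option synthInstance.maxSize 1000000 in
set_option synthInstance.maxHeartbeats 10000000 in
set_option maxHeartbeats 400000000 in
set_option maxRecDepth 1000000 in
theorem key5 : ∀ a b : Fin 5, a < b → ∀ c, b < c → ∀ d e : Fin 5, d < e → ∀ f, e < f →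
    lex3 a b c d e f → ¬(a = d ∧ b = e ∧ c = f) →
    ∀ g h : Fin 5, g < h → ∀ i, h < i →
    lex3 d e f g h i → ¬(a = g ∧ b = h ∧ c = i) → ¬(d = g ∧ e = h ∧ f = i) →
    ∀ x, (x = a ∨ x = b ∨ x = c) → (x = g ∨ x = h ∨ x = i) →
    ∀ y, y ≠ x → (y = a ∨ y = b ∨ y = c) → (y = d ∨ y = e ∨ y = f) →
    ∀ z, z ≠ x → z ≠ y → (z = d ∨ z = e ∨ z = f) → (z = g ∨ z = h ∨ z = i) →
    (∀ v : Fin 5, v = a ∨ v = b ∨ v = c ∨ v = d ∨ v = e ∨ v = f ∨ v = g ∨ v = h ∨ v = i) →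
    good TP3 (bTP3 {d,e,f} {a,b,c} {g,h,i}) {a,b,c} {d,e,f} {g,h,i} ∨
    good TP3 (bTP3 {a,b,c} {d,e,f} {g,h,i}) {a,b,c} {d,e,f} {g,h,i} ∨
    good TP3 (bTP3 {a,b,c} {g,h,i} {d,e,f}) {a,b,c} {d,e,f} {g,h,i} ∨
    good F5 (bF5 {a,b,c} {d,e,f} {g,h,i}) {a,b,c} {d,e,f} {g,h,i} ∨
    good F5 (bF5 {a,b,c} {g,h,i} {d,e,f}) {a,b,c} {d,e,f} {g,h,i} ∨
    good F5 (bF5 {d,e,f} {g,h,i} {a,b,c}) {a,b,c} {d,e,f} {g,h,i} := by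
  decide

set_option synthInstance.maxSize 1000000 in
set_option synthInstance.maxHeartbeats 10000000 in
set_option maxHeartbeats 400000000 in
set_option maxRecDepth 1000000 in
theorem key4 : ∀ a b : Fin 4, a < b → ∀ c, b < c → ∀ d e : Fin 4, d < e → ∀ f, e < f →
    lex3 a b c d e f → ¬(a = d ∧ b = e ∧ c = f) →
    ∀ g h : Fin 4, g < h → ∀ i, h < i →
    lex3 d e f g h i → ¬(a = g ∧ b = h ∧ c = i) → ¬(d = g ∧ e = h ∧ f = i) →
    ∀ x, (x = a ∨ x = b ∨ x = c) → (x = g ∨ x = h ∨ x = i) →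
    ∀ y, y ≠ x → (y = a ∨ y = b ∨ y = c) → (y = d ∨ y = e ∨ y = f) →
    ∀ z, z ≠ x → z ≠ y → (z = d ∨ z = e ∨ z = f) → (z = g ∨ z = h ∨ z = i) →
    (∀ v : Fin 4, v = a ∨ v = b ∨ v = c ∨ v = d ∨ v = e ∨ v = f ∨ v = g ∨ v = h ∨ v = i) →
    good K4minus (bK4 {a,b,c} {d,e,f} {g,h,i}) {a,b,c} {d,e,f} {g,h,i} := by
  decide

set_option synthInstance.maxSize 1000000 in
set_option synthInstance.maxHeartbeats 10000000 in
set_option maxHeartbeats 400000000 in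
set_option maxRecDepth 1000000 in
theorem key3 : ∀ a b : Fin 3, a < b → ∀ c, b < c → ∀ d e : Fin 3, d < e → ∀ f, e < f →
    lex3 a b c d e f → ¬(a = d ∧ b = e ∧ c = f) →
    ∀ g h : Fin 3, g < h → ∀ i, h < i →
    lex3 d e f g h i → ¬(a = g ∧ b = h ∧ c = i) → ¬(d = g ∧ e = h ∧ f = i) →
    ∀ x, (x = a ∨ x = b ∨ x = c) → (x = g ∨ x = h ∨ x = i) →
    ∀ y, y ≠ x → (y = a ∨ y = b ∨ y = c) → (y = d ∨ y = e ∨ y = f) →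
    ∀ z, z ≠ x → z ≠ y → (z = d ∨ z = e ∨ z = f) → (z = g ∨ z = h ∨ z = i) →
    (∀ v : Fin 3, v = a ∨ v = b ∨ v = c ∨ v = d ∨ v = e ∨ v = f ∨ v = g ∨ v = h ∨ v = i) →
    False := by
  decide

/-! ### Set-level versions for sorted triples -/

lemma key6'' (A B C : Finset (Fin 6)) (a b c d e f g h i : Fin 6)
    (hA : A = {a,b,c}) (hB : B = {d,e,f}) (hC : C = {g,h,i})
    (hab : a < b) (hbc : b < c) (hde : d < e) (hef : e < f) (hgh : g < h) (hhi : h < i)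
    (l1 : lex3 a b c d e f) (l2 : lex3 d e f g h i)
    (nAB : A ≠ B) (nAC : A ≠ C) (nBC : B ≠ C)
    (hcov : ∀ v, v ∈ A ∨ v ∈ B ∨ v ∈ C)
    (w : BergeWit A B C) : HGIso {A, B, C} LC3 := by
  obtain ⟨x, y, z, hxy, hyz, hxz, hx1, hy1, hy2, hz2, hx3, hz3⟩ := w
  subst hA hB hC
  have hg := key6 a b hab c hbc d e hde f hef l1
    (by rintro ⟨rfl, rfl, rfl⟩; exact nAB rfl)
    g h hgh i hhi l2
    (by rintro ⟨rfl, rfl, rfl⟩; exact nAC rfl)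
    (by rintro ⟨rfl, rfl, rfl⟩; exact nBC rfl)
    x (by simpa using hx1) (by simpa using hx3)
    y (Ne.symm hxy) (by simpa using hy1) (by simpa using hy2)
    z (Ne.symm hxz) (Ne.symm hyz) (by simpa using hz2) (by simpa using hz3)
    (by intro v; rcases hcov v with hv | hv | hv <;> simp at hv <;> tauto)
  exact hgiso_of_good LC3 (by decide) (by decide) _ _ _ _ hg

lemma key5'' (A B C : Finset (Fin 5)) (a b c d e f g h i : Fin 5)
    (hA : A = {a,b,c}) (hB : B = {d,e,f}) (hC : C = {g,h,i})
    (hab : a < b) (hbc : b < c) (hde : d < e) (hef : e < f) (hgh : g < h) (hhi : h < i)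
    (l1 : lex3 a b c d e f) (l2 : lex3 d e f g h i)
    (nAB : A ≠ B) (nAC : A ≠ C) (nBC : B ≠ C)
    (hcov : ∀ v, v ∈ A ∨ v ∈ B ∨ v ∈ C)
    (w : BergeWit A B C) : HGIso {A, B, C} TP3 ∨ HGIso {A, B, C} F5 := by
  obtain ⟨x, y, z, hxy, hyz, hxz, hx1, hy1, hy2, hz2, hx3, hz3⟩ := w
  subst hA hB hC
  have hg := key5 a b hab c hbc d e hde f hef l1
    (by rintro ⟨rfl, rfl, rfl⟩; exact nAB rfl)
    g h hgh i hhi l2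
    (by rintro ⟨rfl, rfl, rfl⟩; exact nAC rfl)
    (by rintro ⟨rfl, rfl, rfl⟩; exact nBC rfl)
    x (by simpa using hx1) (by simpa using hx3)
    y (Ne.symm hxy) (by simpa using hy1) (by simpa using hy2)
    z (Ne.symm hxz) (Ne.symm hyz) (by simpa using hz2) (by simpa using hz3)
    (by intro v; rcases hcov v with hv | hv | hv <;> simp at hv <;> tauto)
  rcases hg with hg | hg | hg | hg | hg | hg
  · exact Or.inl (hgiso_of_good TP3 (by decide) (by decide) _ _ _ _ hg)
  · exact Or.inl (hgiso_of_good TP3 (by decide) (by decide) _ _ _ _ hg)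
  · exact Or.inl (hgiso_of_good TP3 (by decide) (by decide) _ _ _ _ hg)
  · exact Or.inr (hgiso_of_good F5 (by decide) (by decide) _ _ _ _ hg)
  · exact Or.inr (hgiso_of_good F5 (by decide) (by decide) _ _ _ _ hg)
  · exact Or.inr (hgiso_of_good F5 (by decide) (by decide) _ _ _ _ hg)

lemma key4'' (A B C : Finset (Fin 4)) (a b c d e f g h i : Fin 4)
    (hA : A = {a,b,c}) (hB : B = {d,e,f}) (hC : C = {g,h,i})
    (hab : a < b) (hbc : b < c) (hde : d < e) (hef : e < f) (hgh : g < h) (hhi : h < i)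
    (l1 : lex3 a b c d e f) (l2 : lex3 d e f g h i)
    (nAB : A ≠ B) (nAC : A ≠ C) (nBC : B ≠ C)
    (hcov : ∀ v, v ∈ A ∨ v ∈ B ∨ v ∈ C)
    (w : BergeWit A B C) : HGIso {A, B, C} K4minus := by
  obtain ⟨x, y, z, hxy, hyz, hxz, hx1, hy1, hy2, hz2, hx3, hz3⟩ := w
  subst hA hB hC
  have hg := key4 a b hab c hbc d e hde f hef l1
    (by rintro ⟨rfl, rfl, rfl⟩; exact nAB rfl)
    g h hgh i hhi l2
    (by rintro ⟨rfl, rfl, rfl⟩; exact nAC rfl)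
    (by rintro ⟨rfl, rfl, rfl⟩; exact nBC rfl)
    x (by simpa using hx1) (by simpa using hx3)
    y (Ne.symm hxy) (by simpa using hy1) (by simpa using hy2)
    z (Ne.symm hxz) (Ne.symm hyz) (by simpa using hz2) (by simpa using hz3)
    (by intro v; rcases hcov v with hv | hv | hv <;> simp at hv <;> tauto)
  exact hgiso_of_good K4minus (by decide) (by decide) _ _ _ _ hg

lemma key3'' (A B C : Finset (Fin 3)) (a b c d e f g h i : Fin 3)
    (hA : A = {a,b,c}) (hB : B = {d,e,f}) (hC : C = {g,h,i})
    (hab : a < b) (hbc : b < c) (hde : d < e) (hef : e < f) (hgh : g < h) (hhi : h < i)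
    (l1 : lex3 a b c d e f) (l2 : lex3 d e f g h i)
    (nAB : A ≠ B) (nAC : A ≠ C) (nBC : B ≠ C)
    (hcov : ∀ v, v ∈ A ∨ v ∈ B ∨ v ∈ C)
    (w : BergeWit A B C) : False := by
  obtain ⟨x, y, z, hxy, hyz, hxz, hx1, hy1, hy2, hz2, hx3, hz3⟩ := w
  subst hA hB hC
  exact key3 a b hab c hbc d e hde f hef l1
    (by rintro ⟨rfl, rfl, rfl⟩; exact nAB rfl)
    g h hgh i hhi l2
    (by rintro ⟨rfl, rfl, rfl⟩; exact nAC rfl)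
    (by rintro ⟨rfl, rfl, rfl⟩; exact nBC rfl)
    x (by simpa using hx1) (by simpa using hx3)
    y (Ne.symm hxy) (by simpa using hy1) (by simpa using hy2)
    z (Ne.symm hxz) (Ne.symm hyz) (by simpa using hz2) (by simpa using hz3)
    (by intro v; rcases hcov v with hv | hv | hv <;> simp at hv <;> tauto)

/-! ### Sorting the three edges -/

lemma sort_apply {n : ℕ} (R : Finset (Finset (Fin n)) → Prop)
    (key : ∀ (A B C : Finset (Fin n)) (a b c d e f g h i : Fin n),
      A = {a,b,c} → B = {d,e,f} → C = {g,h,i} →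
      a < b → b < c → d < e → e < f → g < h → h < i →
      lex3 a b c d e f → lex3 d e f g h i →
      A ≠ B → A ≠ C → B ≠ C →
      (∀ v, v ∈ A ∨ v ∈ B ∨ v ∈ C) → BergeWit A B C → R {A, B, C})
    (A B C : Finset (Fin n)) (hA3 : A.card = 3) (hB3 : B.card = 3) (hC3 : C.card = 3)
    (nAB : A ≠ B) (nAC : A ≠ C) (nBC : B ≠ C)
    (hcov : ∀ v, v ∈ A ∨ v ∈ B ∨ v ∈ C)
    (w : BergeWit A B C) : R {A, B, C} := by
  obtain ⟨a, b, c, hab, hbc, hA⟩ := exists_sorted hA3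
  obtain ⟨d, e, f, hde, hef, hB⟩ := exists_sorted hB3
  obtain ⟨g, h, i, hgh, hhi, hC⟩ := exists_sorted hC3
  have covBAC : ∀ v, v ∈ B ∨ v ∈ A ∨ v ∈ C := fun v => by rcases hcov v with h' | h' | h' <;> tauto
  have covACB : ∀ v, v ∈ A ∨ v ∈ C ∨ v ∈ B := fun v => by rcases hcov v with h' | h' | h' <;> tauto
  have covCAB : ∀ v, v ∈ C ∨ v ∈ A ∨ v ∈ B := fun v => by rcases hcov v with h' | h' | h' <;> tauto
  have covBCA : ∀ v, v ∈ B ∨ v ∈ C ∨ v ∈ A := fun v => by rcases hcov v with h' | h' | h' <;> tauto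
  have covCBA : ∀ v, v ∈ C ∨ v ∈ B ∨ v ∈ A := fun v => by rcases hcov v with h' | h' | h' <;> tauto
  have eBAC : ({B, A, C} : Finset (Finset (Fin n))) = {A, B, C} := by ext s; simp; tauto
  have eACB : ({A, C, B} : Finset (Finset (Fin n))) = {A, B, C} := by ext s; simp; tauto
  have eCAB : ({C, A, B} : Finset (Finset (Fin n))) = {A, B, C} := by ext s; simp; tauto
  have eBCA : ({B, C, A} : Finset (Finset (Fin n))) = {A, B, C} := by ext s; simp; tauto
  have eCBA : ({C, B, A} : Finset (Finset (Fin n))) = {A, B, C} := by ext s; simp; tauto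
  rcases lex3_total a b c d e f with l1 | l1 <;>
    rcases lex3_total d e f g h i with l2 | l2 <;>
    rcases lex3_total a b c g h i with l3 | l3
  · exact key A B C a b c d e f g h i hA hB hC hab hbc hde hef hgh hhi l1 l2 nAB nAC nBC hcov w
  · exact key A B C a b c d e f g h i hA hB hC hab hbc hde hef hgh hhi l1 l2 nAB nAC nBC hcov w
  · exact eACB ▸ key A C B a b c g h i d e f hA hC hB hab hbc hgh hhi hde hef l3 l2
      nAC nAB nBC.symm covACB (bw_swap23 w)
  · exact eCAB ▸ key C A B g h i a b c d e f hC hA hB hgh hhi hab hbc hde hef l3 l1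
      nAC.symm nBC.symm nAB covCAB (bw_swap12 (bw_swap23 w))
  · exact eBAC ▸ key B A C d e f a b c g h i hB hA hC hde hef hab hbc hgh hhi l1 l3
      nAB.symm nBC nAC covBAC (bw_swap12 w)
  · exact eBCA ▸ key B C A d e f g h i a b c hB hC hA hde hef hgh hhi hab hbc l2 l3
      nBC nAB.symm nAC.symm covBCA (bw_swap23 (bw_swap12 w))
  · exact eCBA ▸ key C B A g h i d e f a b c hC hB hA hgh hhi hde hef hab hbc l2 l1
      nBC.symm nAC.symm nAB.symm covCBA (bw_swap12 (bw_swap23 (bw_swap12 w)))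
  · exact eCBA ▸ key C B A g h i d e f a b c hC hB hA hgh hhi hde hef hab hbc l2 l1
      nBC.symm nAC.symm nAB.symm covCBA (bw_swap12 (bw_swap23 (bw_swap12 w)))

/-! ### Transporting the data along `U ≃ Fin n` -/

lemma transport {U : Type} [DecidableEq U] {n : ℕ} (g : U ≃ Fin n)
    (e1 e2 e3 : Finset U) (hc1 : e1.card = 3) (hc2 : e2.card = 3) (hc3 : e3.card = 3)
    (h12 : e1 ≠ e2) (h13 : e1 ≠ e3) (h23 : e2 ≠ e3)
    (hcU : ∀ u : U, u ∈ e1 ∨ u ∈ e2 ∨ u ∈ e3)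
    (x y z : U) (hxy : x ≠ y) (hyz : y ≠ z) (hxz : x ≠ z)
    (hx1 : x ∈ e1) (hy1 : y ∈ e1) (hy2 : y ∈ e2) (hz2 : z ∈ e2) (hx3 : x ∈ e3) (hz3 : z ∈ e3) :
    (e1.image ⇑g).card = 3 ∧ (e2.image ⇑g).card = 3 ∧ (e3.image ⇑g).card = 3 ∧
    e1.image ⇑g ≠ e2.image ⇑g ∧ e1.image ⇑g ≠ e3.image ⇑g ∧ e2.image ⇑g ≠ e3.image ⇑g ∧
    (∀ v : Fin n, v ∈ e1.image ⇑g ∨ v ∈ e2.image ⇑g ∨ v ∈ e3.image ⇑g) ∧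
    BergeWit (e1.image ⇑g) (e2.image ⇑g) (e3.image ⇑g) := by
  have himg : ∀ s : Finset U, (s.image ⇑g).card = s.card :=
    fun s => Finset.card_image_of_injective s g.injective
  have hinj : Function.Injective (Finset.image ⇑g) := Finset.image_injective g.injective
  refine ⟨(himg e1).trans hc1, (himg e2).trans hc2, (himg e3).trans hc3,
    fun h => h12 (hinj h), fun h => h13 (hinj h), fun h => h23 (hinj h), ?_, ?_⟩
  · intro v
    rcases hcU (g.symm v) with h | h | h
    · exact Or.inl (Finset.mem_image.mpr ⟨g.symm v, h, by simp⟩)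
    · exact Or.inr (Or.inl (Finset.mem_image.mpr ⟨g.symm v, h, by simp⟩))
    · exact Or.inr (Or.inr (Finset.mem_image.mpr ⟨g.symm v, h, by simp⟩))
  · exact ⟨g x, g y, g z, g.injective.ne hxy, g.injective.ne hyz, g.injective.ne hxz,
      Finset.mem_image_of_mem _ hx1, Finset.mem_image_of_mem _ hy1,
      Finset.mem_image_of_mem _ hy2, Finset.mem_image_of_mem _ hz2,
      Finset.mem_image_of_mem _ hx3, Finset.mem_image_of_mem _ hz3⟩

/-- Every 3-uniform Berge triangle (in which every vertex lies in some
edge) is isomorphic to exactly one of `LC₃`, `TP₃`, `F₅`, `K₄^{3-}`. -/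
theorem statement18 (U : Type) [Fintype U] [DecidableEq U]
    (FE : Finset (Finset U))
    (hcover : ∀ u : U, ∃ e ∈ FE, u ∈ e)
    (hberge : IsBergeTriangle FE) :
    (HGIso FE LC3 ∨ HGIso FE TP3 ∨ HGIso FE F5 ∨ HGIso FE K4minus) ∧
    ¬ (HGIso FE LC3 ∧ HGIso FE TP3) ∧
    ¬ (HGIso FE LC3 ∧ HGIso FE F5) ∧
    ¬ (HGIso FE LC3 ∧ HGIso FE K4minus) ∧
    ¬ (HGIso FE TP3 ∧ HGIso FE F5) ∧
    ¬ (HGIso FE TP3 ∧ HGIso FE K4minus) ∧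
    ¬ (HGIso FE F5 ∧ HGIso FE K4minus) := by
  obtain ⟨huni, e1, e2, e3, h12, h13, h23, hFE, x, y, z, hxy, hyz, hxz,
    hx1, hy1, hy2, hz2, hx3, hz3⟩ := hberge
  subst hFE
  have hc1 : e1.card = 3 := huni e1 (by simp)
  have hc2 : e2.card = 3 := huni e2 (by simp)
  have hc3 : e3.card = 3 := huni e3 (by simp)
  have hcU : ∀ u : U, u ∈ e1 ∨ u ∈ e2 ∨ u ∈ e3 := by
    intro u
    obtain ⟨e, he, hu⟩ := hcover u
    simp only [Finset.mem_insert, Finset.mem_singleton] at he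
    rcases he with rfl | rfl | rfl <;> tauto
  -- cardinality bounds
  have huniv : (Finset.univ : Finset U) = (e1 ∪ e2) ∪ e3 := by
    ext u
    simp only [Finset.mem_univ, true_iff, Finset.mem_union]
    rcases hcU u with h | h | h <;> tauto
  have hub : Fintype.card U ≤ 6 := by
    have h1 : (e1 ∪ e2).card + (e1 ∩ e2).card = 6 := by
      rw [Finset.card_union_add_card_inter, hc1, hc2]
    have h2 : 0 < (e1 ∩ e2).card :=
      Finset.card_pos.mpr ⟨y, Finset.mem_inter.mpr ⟨hy1, hy2⟩⟩
    have h3 : ((e1 ∪ e2) ∪ e3).card + ((e1 ∪ e2) ∩ e3).card = (e1 ∪ e2).card + 3 := by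
      rw [Finset.card_union_add_card_inter, hc3]
    have hsub : ({x, z} : Finset U) ⊆ (e1 ∪ e2) ∩ e3 := by
      intro u hu
      simp only [Finset.mem_insert, Finset.mem_singleton] at hu
      rcases hu with rfl | rfl <;>
        simp [Finset.mem_inter, Finset.mem_union, hx1, hx3, hz2, hz3]
    have h4 : 2 ≤ ((e1 ∪ e2) ∩ e3).card := by
      have : ({x, z} : Finset U).card = 2 := by
        rw [Finset.card_insert_of_notMem (by simp [hxz]), Finset.card_singleton]
      calc 2 = ({x, z} : Finset U).card := this.symm
        _ ≤ _ := Finset.card_le_card hsub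
    have h5 : Fintype.card U = ((e1 ∪ e2) ∪ e3).card := by
      rw [← Finset.card_univ, huniv]
    omega
  have hlb : 3 ≤ Fintype.card U := by
    have hxyz : ({x, y, z} : Finset U).card = 3 := by
      rw [Finset.card_insert_of_notMem (by simp [hxy, hxz]),
        Finset.card_insert_of_notMem (by simp [hyz]), Finset.card_singleton]
    calc 3 = ({x, y, z} : Finset U).card := hxyz.symm
      _ ≤ (Finset.univ : Finset U).card := Finset.card_le_univ _
      _ = Fintype.card U := Finset.card_univ
  constructor
  · -- existence
    have hnc : Fintype.card U = 3 ∨ Fintype.card U = 4 ∨ Fintype.card U = 5 ∨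
        Fintype.card U = 6 := by omega
    rcases hnc with hcard | hcard | hcard | hcard
    · -- |U| = 3 : impossible
      have g := Fintype.equivFinOfCardEq hcard
      obtain ⟨c1, c2, c3, n12, n13, n23, cov, wit⟩ := transport g e1 e2 e3 hc1 hc2 hc3
        h12 h13 h23 hcU x y z hxy hyz hxz hx1 hy1 hy2 hz2 hx3 hz3
      exact ((sort_apply (fun _ => False)
        (fun A B C a b c d e f g' h' i hA hB hC hab hbc hde hef hgh hhi l1 l2 nAB nAC nBC hcov w =>
          key3'' A B C a b c d e f g' h' i hA hB hC hab hbc hde hef hgh hhi l1 l2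
            nAB nAC nBC hcov w)
        _ _ _ c1 c2 c3 n12 n13 n23 cov wit)).elim
    · -- |U| = 4 : K4minus
      have g := Fintype.equivFinOfCardEq hcard
      obtain ⟨c1, c2, c3, n12, n13, n23, cov, wit⟩ := transport g e1 e2 e3 hc1 hc2 hc3
        h12 h13 h23 hcU x y z hxy hyz hxz hx1 hy1 hy2 hz2 hx3 hz3
      have hiso := sort_apply (fun S => HGIso S K4minus)
        (fun A B C a b c d e f g' h' i hA hB hC hab hbc hde hef hgh hhi l1 l2 nAB nAC nBC hcov w =>
          key4'' A B C a b c d e f g' h' i hA hB hC hab hbc hde hef hgh hhi l1 l2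
            nAB nAC nBC hcov w)
        _ _ _ c1 c2 c3 n12 n13 n23 cov wit
      exact Or.inr (Or.inr (Or.inr (hgiso_image g e1 e2 e3 K4minus hiso)))
    · -- |U| = 5 : TP3 or F5
      have g := Fintype.equivFinOfCardEq hcard
      obtain ⟨c1, c2, c3, n12, n13, n23, cov, wit⟩ := transport g e1 e2 e3 hc1 hc2 hc3
        h12 h13 h23 hcU x y z hxy hyz hxz hx1 hy1 hy2 hz2 hx3 hz3
      have hiso := sort_apply (fun S => HGIso S TP3 ∨ HGIso S F5)
        (fun A B C a b c d e f g' h' i hA hB hC hab hbc hde hef hgh hhi l1 l2 nAB nAC nBC hcov w =>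
          key5'' A B C a b c d e f g' h' i hA hB hC hab hbc hde hef hgh hhi l1 l2
            nAB nAC nBC hcov w)
        _ _ _ c1 c2 c3 n12 n13 n23 cov wit
      rcases hiso with hiso | hiso
      · exact Or.inr (Or.inl (hgiso_image g e1 e2 e3 TP3 hiso))
      · exact Or.inr (Or.inr (Or.inl (hgiso_image g e1 e2 e3 F5 hiso)))
    · -- |U| = 6 : LC3
      have g := Fintype.equivFinOfCardEq hcard
      obtain ⟨c1, c2, c3, n12, n13, n23, cov, wit⟩ := transport g e1 e2 e3 hc1 hc2 hc3
        h12 h13 h23 hcU x y z hxy hyz hxz hx1 hy1 hy2 hz2 hx3 hz3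
      have hiso := sort_apply (fun S => HGIso S LC3)
        (fun A B C a b c d e f g' h' i hA hB hC hab hbc hde hef hgh hhi l1 l2 nAB nAC nBC hcov w =>
          key6'' A B C a b c d e f g' h' i hA hB hC hab hbc hde hef hgh hhi l1 l2
            nAB nAC nBC hcov w)
        _ _ _ c1 c2 c3 n12 n13 n23 cov wit
      exact Or.inl (hgiso_image g e1 e2 e3 LC3 hiso)
  refine ⟨not_iso_pair (by omega) LC3 TP3, not_iso_pair (by omega) LC3 F5,
    not_iso_pair (by omega) LC3 K4minus, ?_, not_iso_pair (by omega) TP3 K4minus,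
    not_iso_pair (by omega) F5 K4minus⟩
  -- TP3 vs F5
  rintro ⟨⟨φ, hφ⟩, ⟨ψ, hψ⟩⟩
  set σ : Fin 5 ≃ Fin 5 := φ.symm.trans ψ with hσdef
  have hcancel : ∀ s : Finset (Fin 5), (s.image ⇑φ.symm).image ⇑φ = s := by
    intro s
    rw [Finset.image_image]
    simp
  have hσim : ∀ s : Finset (Fin 5), (s.image ⇑φ.symm).image ⇑ψ = s.image ⇑σ := by
    intro s
    rw [Finset.image_image, hσdef]
    rfl
  have hσ : ∀ s : Finset (Fin 5), s ∈ TP3 ↔ s.image ⇑σ ∈ F5 := by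
    intro s
    rw [← hσim, ← hψ (s.image ⇑φ.symm), hφ (s.image ⇑φ.symm), hcancel]
  have h2mem : ∀ s ∈ TP3, (2 : Fin 5) ∈ s := by decide
  have hall : ∀ t ∈ F5, σ 2 ∈ t := by
    intro t ht
    have hpre : t.image ⇑σ.symm ∈ TP3 := by
      rw [hσ]
      have : (t.image ⇑σ.symm).image ⇑σ = t := by
        rw [Finset.image_image]
        simp
      rwa [this]
    have := Finset.mem_image_of_mem ⇑σ (h2mem _ hpre)
    have himt : (t.image ⇑σ.symm).image ⇑σ = t := by
      rw [Finset.image_image]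
      simp
    rwa [himt] at this
  have : ¬ ∃ w : Fin 5, ∀ t ∈ F5, w ∈ t := by decide
  exact this ⟨σ 2, hall⟩
end
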